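/- arXiv:2204.14212 — 11 statements merged into one kernel-verified Lean document; each statement's English description precedes it below -/
import Mathlib

section
/- For digraphs G and H with nonempty vertex sets, the dichromatic number of their cartesian product equals the maximum of their dichromatic numbers: χ_a(G □ H) = max{χ_a(G), χ_a(H)}. -/
/-- A directed cycle in the digraph with arc relation `Adj`: a list of at least two
distinct vertices with an arc between consecutive vertices and an arc from the last
vertex back to the first. -/
def IsDicycle {V : Type*} (Adj : V → V → Prop) (l : List V) : Prop :=
  2 ≤ l.length ∧ l.Nodup ∧ l.Chain' Adj ∧
    ∀ h : l ≠ [], Adj (l.getLast h) (l.head h)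

/-- A set of vertices is acyclic if the induced subdigraph contains no directed cycle. -/
def AcyclicSet {V : Type*} (Adj : V → V → Prop) (S : Set V) : Prop :=
  ¬ ∃ l : List V, (∀ v ∈ l, v ∈ S) ∧ IsDicycle Adj l

/-- A coloring is acyclic if every color class is an acyclic set. -/
def IsAcyclicColoring {V C : Type*} (Adj : V → V → Prop) (f : V → C) : Prop :=
  ∀ c : C, AcyclicSet Adj (f ⁻¹' {c})

/-- The dichromatic number: the least `k` admitting an acyclic `k`-coloring. -/
noncomputable def dichromaticNumber {V : Type*} (Adj : V → V → Prop) : ℕ :=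
  sInf {k : ℕ | ∃ f : V → Fin k, IsAcyclicColoring Adj f}

/-- Cartesian product of digraphs. -/
def cartAdj {V W : Type*} (GA : V → V → Prop) (HA : W → W → Prop) :
    V × W → V × W → Prop :=
  fun p q => (p.1 = q.1 ∧ HA p.2 q.2) ∨ (GA p.1 q.1 ∧ p.2 = q.2)

/-- Direct product of digraphs. -/
def directAdj {V W : Type*} (GA : V → V → Prop) (HA : W → W → Prop) :
    V × W → V × W → Prop :=
  fun p q => GA p.1 q.1 ∧ HA p.2 q.2

/-- Strong product of digraphs. -/
def strongAdj {V W : Type*} (GA : V → V → Prop) (HA : W → W → Prop) :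
    V × W → V × W → Prop :=
  fun p q => (p.1 = q.1 ∧ HA p.2 q.2) ∨ (GA p.1 q.1 ∧ p.2 = q.2) ∨
    (GA p.1 q.1 ∧ HA p.2 q.2)

/-- Lexicographic product of digraphs. -/
def lexAdj {V W : Type*} (GA : V → V → Prop) (HA : W → W → Prop) :
    V × W → V × W → Prop :=
  fun p q => GA p.1 q.1 ∨ (p.1 = q.1 ∧ HA p.2 q.2)

/-- The dicycle on `n` vertices: arcs `i → i + 1` on `ZMod n`. -/
def dicycleAdj (n : ℕ) : ZMod n → ZMod n → Prop := fun i j => j = i + 1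

/-- The complete digraph on `k` vertices. -/
def completeAdj (k : ℕ) : Fin k → Fin k → Prop := fun i j => i ≠ j

section Aux
open List
variable {V : Type*} {Adj : V → V → Prop}

lemma acyclicSet_of_subsingleton {S : Set V} (hS : S.Subsingleton) : AcyclicSet Adj S := by
  rintro ⟨l, hmem, hlen, hnodup, -⟩
  match l, hlen, hnodup, hmem with
  | a :: b :: t, _, hnodup, hmem =>
    have hab : a = b := hS (hmem a (by simp)) (hmem b (by simp))
    exact (nodup_cons.mp hnodup).1 (by simp [hab])

lemma injective_acyclicColoring {C : Type*} {f : V → C} (hf : Function.Injective f) :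
    IsAcyclicColoring Adj f := fun _ =>
  acyclicSet_of_subsingleton (fun _ hx _ hy => hf (hx.trans hy.symm))

lemma IsAcyclicColoring.comp {C D : Type*} {f : V → C} (hf : IsAcyclicColoring Adj f)
    (e : C → D) (he : Function.Injective e) :
    IsAcyclicColoring Adj (fun v => e (f v)) := by
  intro c
  rintro ⟨l, hmem, hdic⟩
  have hne : l ≠ [] := by rintro rfl; simp [IsDicycle] at hdic
  refine hf (f (l.head hne)) ⟨l, ?_, hdic⟩
  intro v hv
  exact he ((hmem v hv).trans (hmem _ (List.head_mem hne)).symm)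

lemma collapse (x : V) (l : List V)
    (h : List.Chain' (fun a b => Adj a b ∨ a = b) (x :: l)) :
    ∃ m : List V, List.Chain' Adj (x :: m) ∧ (∀ v, v ∈ x :: m ↔ v ∈ x :: l) ∧
      (x :: m).getLast (by simp) = (x :: l).getLast (by simp) := by
  induction l generalizing x with
  | nil => exact ⟨[], List.isChain_singleton x, by simp, by simp⟩
  | cons b t ih =>
    have hcb : Adj x b ∨ x = b := (List.isChain_cons_cons.mp h).1
    obtain ⟨m', hm'chain, hm'mem, hm'last⟩ := ih b (List.isChain_cons_cons.mp h).2
    by_cases hab : x = b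
    · subst hab
      refine ⟨m', hm'chain, ?_, ?_⟩
      · intro v
        have := hm'mem v
        simp only [List.mem_cons] at this ⊢
        tauto
      · simpa [List.getLast_cons] using hm'last
    · refine ⟨b :: m', List.isChain_cons_cons.mpr ⟨hcb.resolve_right hab, hm'chain⟩, ?_, ?_⟩
      · intro v
        have := hm'mem v
        simp only [List.mem_cons] at this ⊢
        tauto
      · simpa [List.getLast_cons] using hm'last

end Aux
section Aux2
open List
variable {V : Type*} {Adj : V → V → Prop}

lemma dup_decomp : ∀ {l : List V}, ¬ l.Nodup →
    ∃ (y : V) (l₁ l₂ l₃ : List V), l = l₁ ++ y :: (l₂ ++ y :: l₃) := by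
  intro l
  induction l with
  | nil => simp
  | cons a t ih =>
    intro h
    by_cases ha : a ∈ t
    · obtain ⟨s, u, rfl⟩ := List.append_of_mem ha
      exact ⟨a, [], s, u, by simp⟩
    · have : ¬ t.Nodup := fun hn => h (List.nodup_cons.mpr ⟨ha, hn⟩)
      obtain ⟨y, l₁, l₂, l₃, rfl⟩ := ih this
      exact ⟨y, a :: l₁, l₂, l₃, by simp⟩

lemma extract (hirr : Irreflexive Adj) (S : Set V) :
    ∀ (n : ℕ) (x : V) (p : List V), p.length = n →
      List.Chain' Adj (x :: p ++ [x]) → (∀ v ∈ x :: p, v ∈ S) →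
      ∃ l, (∀ v ∈ l, v ∈ S) ∧ IsDicycle Adj l := by
  intro n
  induction n using Nat.strong_induction_on with
  | _ n ih =>
  intro x p hlen hchain hS
  by_cases hnd : (x :: p).Nodup
  · match p, hlen, hchain, hS, hnd with
    | [], _, hchain, _, _ => exact absurd (List.isChain_pair.mp hchain) (hirr x)
    | q :: t, hlen, hchain, hS, hnd =>
      have hsplit := List.isChain_append.mp
        (show Chain' Adj ((x :: q :: t) ++ [x]) from hchain)
      refine ⟨x :: q :: t, hS, by simp, hnd, hsplit.1, ?_⟩
      intro h
      refine hsplit.2.2 _ ?_ x (by simp)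
      rw [List.getLast?_eq_getLast h]
      simp
  · obtain ⟨y, l₁, l₂, l₃, hdec⟩ := dup_decomp hnd
    have hbig : x :: p ++ [x] = l₁ ++ ((y :: l₂ ++ [y]) ++ (l₃ ++ [x])) := by
      rw [show x :: p ++ [x] = (x :: p) ++ [x] from rfl, hdec]; simp
    have hinfix : (y :: l₂ ++ [y]) <:+: (x :: p ++ [x]) := ⟨l₁, l₃ ++ [x], by rw [hbig]; simp⟩
    have hlen2 : l₂.length < n := by
      have := congrArg List.length hdec
      simp at this
      omega
    refine ih l₂.length hlen2 y l₂ rfl (hchain.infix hinfix) ?_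
    intro v hv
    apply hS
    rw [hdec]
    rcases List.mem_cons.mp hv with rfl | hv2
    · simp
    · simp [hv2]

lemma exists_dicycle_of_walk (hirr : Irreflexive Adj) (S : Set V) (x : V) (p : List V)
    (hchain : List.Chain' (fun a b => Adj a b ∨ a = b) (x :: p ++ [x]))
    (hy : ∃ y ∈ x :: p, y ≠ x) (hS : ∀ v ∈ x :: p, v ∈ S) :
    ∃ l, (∀ v ∈ l, v ∈ S) ∧ IsDicycle Adj l := by
  obtain ⟨m, hmchain, hmmem, hmlast⟩ := collapse x (p ++ [x]) hchain
  obtain ⟨y, hyp, hyx⟩ := hy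
  have hym : y ∈ x :: m := (hmmem y).mpr (by
    rcases List.mem_cons.mp hyp with rfl | h
    · simp
    · simp [h])
  have hmne : m ≠ [] := by
    rintro rfl
    rcases List.mem_singleton.mp hym with rfl
    exact hyx rfl
  have hlastx : m.getLast hmne = x := by
    have h1 : (x :: m).getLast (by simp) = (x :: (p ++ [x])).getLast (by simp) := hmlast
    rw [List.getLast_cons hmne] at h1
    rw [h1]
    rw [List.getLast_cons (by simp : (p ++ [x] : List V) ≠ [])]
    simp
  have hm : m = m.dropLast ++ [x] := by
    conv_lhs => rw [← List.dropLast_append_getLast hmne]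
    rw [hlastx]
  refine extract hirr S m.dropLast.length x m.dropLast rfl ?_ ?_
  · rw [show x :: m.dropLast ++ [x] = x :: (m.dropLast ++ [x]) from rfl, ← hm]
    exact hmchain
  · intro v hv
    have hvm : v ∈ x :: m := by
      rcases List.mem_cons.mp hv with rfl | h
      · simp
      · exact List.mem_cons_of_mem _ (List.dropLast_subset _ h)
    have := (hmmem v).mp hvm
    rcases List.mem_cons.mp this with rfl | h2
    · exact hS v (by simp)
    · rcases List.mem_append.mp h2 with h3 | h3
      · exact hS v (by simp [h3])
      · rcases List.mem_singleton.mp h3 with rfl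
        exact hS _ (by simp)

lemma chain'_const {β : Type*} {R : V → V → Prop} (φ : V → β) :
    ∀ (l : List V), List.Chain' R l →
      (∀ a ∈ l, ∀ b ∈ l, R a b → φ a = φ b) →
      ∀ (h : l ≠ []) (v : V), v ∈ l → φ v = φ (l.head h) := by
  intro l
  induction l with
  | nil => simp
  | cons a t ih =>
    intro hchain hpres h v hv
    rcases List.mem_cons.mp hv with rfl | hv2
    · rfl
    · cases t with
      | nil => simp at hv2
      | cons b t' =>
        have hab : φ a = φ b :=
          hpres a (by simp) b (by simp) (List.isChain_cons_cons.mp hchain).1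
        have hvb := ih (List.isChain_cons_cons.mp hchain).2
          (fun p hp q hq hpq => hpres p (by simp [hp]) q (by simp [hq]) hpq)
          (by simp) v hv2
        simp only [List.head_cons] at hvb ⊢
        rw [hvb, ← hab]

end Aux2
section Aux3
open List
variable {V W : Type*} {GA : V → V → Prop} {HA : W → W → Prop}

lemma cart_coloring (hG : Irreflexive GA) (hH : Irreflexive HA)
    {A : Type*} [AddCommGroup A] {F : V → A} {G' : W → A}
    (hF : IsAcyclicColoring GA F) (hG' : IsAcyclicColoring HA G') :
    IsAcyclicColoring (cartAdj GA HA) (fun p => F p.1 + G' p.2) := by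
  intro c
  rintro ⟨l, hmem, hlen, hnodup, hchain, hwrap⟩
  have hne : l ≠ [] := by rintro rfl; simp at hlen
  set q := l.head hne with hq
  have hcol : ∀ p ∈ l, F p.1 + G' p.2 = c := hmem
  have hstep : ∀ a ∈ l, ∀ b ∈ l, cartAdj GA HA a b →
      F a.1 = F b.1 ∧ G' a.2 = G' b.2 := by
    intro a ha b hb hab
    have hca := hcol a ha; have hcb := hcol b hb
    rcases hab with ⟨h1, h2⟩ | ⟨h1, h2⟩
    · refine ⟨by rw [h1], ?_⟩
      have hx : F a.1 + G' a.2 = F a.1 + G' b.2 := by rw [hca, h1, hcb]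
      exact add_left_cancel hx
    · refine ⟨?_, by rw [h2]⟩
      have hx : F a.1 + G' a.2 = F b.1 + G' a.2 := by rw [hca, h2, hcb]
      exact add_right_cancel hx
  have hconstF : ∀ p ∈ l, F p.1 = F q.1 :=
    chain'_const (fun p => F p.1) l hchain (fun a ha b hb hab => (hstep a ha b hb hab).1) hne
  have hconstG : ∀ p ∈ l, G' p.2 = G' q.2 :=
    chain'_const (fun p => G' p.2) l hchain (fun a ha b hb hab => (hstep a ha b hb hab).2) hne
  obtain ⟨t, hlt⟩ : ∃ t, l = q :: t := ⟨l.tail, (List.cons_head_tail hne).symm⟩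
  have hqmem : q ∈ l := List.head_mem hne
  -- closed walk in cartAdj : l ++ [q]
  have hwalk : Chain' (cartAdj GA HA) (l ++ [q]) := by
    refine List.isChain_append.mpr ⟨hchain, by simp, ?_⟩
    intro a ha b hb
    rw [List.getLast?_eq_getLast hne] at ha
    simp at ha hb
    rw [← ha, ← hb]
    exact hwrap hne
  by_cases hall : ∀ p ∈ l, p.1 = q.1
  · -- all first coords equal : get dicycle in H
    have hy : ∃ p ∈ l, p.2 ≠ q.2 := by
      by_contra hno
      push_neg at hno
      have ht : t ≠ [] := by
        rintro rfl; rw [hlt] at hlen; simp at hlen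
      have hrl : t.head ht ∈ l := by
        rw [hlt]; exact List.mem_cons_of_mem _ (List.head_mem ht)
      have hrq : t.head ht = q :=
        Prod.ext (hall _ hrl) (hno _ hrl)
      rw [hlt] at hnodup
      exact (List.nodup_cons.mp hnodup).1 (hrq ▸ List.head_mem ht)
    obtain ⟨r, hrl, hrq⟩ := hy
    apply hG' (G' q.2)
    refine exists_dicycle_of_walk hH _ q.2 (t.map Prod.snd) ?_ ?_ ?_
    · have hmap : Chain' (fun a b => HA a b ∨ a = b) ((l ++ [q]).map Prod.snd) := by
        show List.IsChain _ _; rw [List.isChain_map]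
        refine hwalk.imp ?_
        rintro a b (⟨h1, h2⟩ | ⟨h1, h2⟩)
        · exact Or.inl h2
        · exact Or.inr h2
      rw [hlt] at hmap
      simpa using hmap
    · refine ⟨r.2, ?_, hrq⟩
      rw [hlt] at hrl
      rcases List.mem_cons.mp hrl with rfl | h
      · simp
      · simp only [List.mem_cons, List.mem_map]
        exact Or.inr ⟨r, h, rfl⟩
    · intro v hv
      rcases List.mem_cons.mp hv with rfl | h
      · rfl
      · obtain ⟨p, hp, rfl⟩ := List.mem_map.mp h
        exact hconstG p (by rw [hlt]; exact List.mem_cons_of_mem _ hp)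
  · -- some first coord differs : get dicycle in G
    push_neg at hall
    obtain ⟨r, hrl, hrq⟩ := hall
    apply hF (F q.1)
    refine exists_dicycle_of_walk hG _ q.1 (t.map Prod.fst) ?_ ?_ ?_
    · have hmap : Chain' (fun a b => GA a b ∨ a = b) ((l ++ [q]).map Prod.fst) := by
        show List.IsChain _ _; rw [List.isChain_map]
        refine hwalk.imp ?_
        rintro a b (⟨h1, h2⟩ | ⟨h1, h2⟩)
        · exact Or.inr h1
        · exact Or.inl h1
      rw [hlt] at hmap
      simpa using hmap
    · refine ⟨r.1, ?_, hrq⟩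
      rw [hlt] at hrl
      rcases List.mem_cons.mp hrl with rfl | h
      · simp
      · simp only [List.mem_cons, List.mem_map]
        exact Or.inr ⟨r, h, rfl⟩
    · intro v hv
      rcases List.mem_cons.mp hv with rfl | h
      · rfl
      · obtain ⟨p, hp, rfl⟩ := List.mem_map.mp h
        exact hconstF p (by rw [hlt]; exact List.mem_cons_of_mem _ hp)

lemma lower_left (w₀ : W) {k : ℕ} {h : V × W → Fin k}
    (hh : IsAcyclicColoring (cartAdj GA HA) h) :
    IsAcyclicColoring GA (fun v => h (v, w₀)) := by
  intro c
  rintro ⟨l, hmem, hlen, hnodup, hchain, hwrap⟩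
  apply hh c
  refine ⟨l.map (fun v => (v, w₀)), ?_, ?_, ?_, ?_, ?_⟩
  · intro p hp; obtain ⟨v, hv, rfl⟩ := List.mem_map.mp hp; exact hmem v hv
  · simpa using hlen
  · exact hnodup.map (fun a b hab => by simpa using congrArg Prod.fst hab)
  · exact (List.isChain_map _).mpr (hchain.imp (fun a b hab => Or.inr ⟨hab, rfl⟩))
  · intro hne
    have hlne : l ≠ [] := by simpa using hne
    rw [List.getLast_map, List.head_map]
    exact Or.inr ⟨hwrap hlne, rfl⟩

lemma lower_right (v₀ : V) {k : ℕ} {h : V × W → Fin k}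
    (hh : IsAcyclicColoring (cartAdj GA HA) h) :
    IsAcyclicColoring HA (fun w => h (v₀, w)) := by
  intro c
  rintro ⟨l, hmem, hlen, hnodup, hchain, hwrap⟩
  apply hh c
  refine ⟨l.map (fun w => (v₀, w)), ?_, ?_, ?_, ?_, ?_⟩
  · intro p hp; obtain ⟨v, hv, rfl⟩ := List.mem_map.mp hp; exact hmem v hv
  · simpa using hlen
  · exact hnodup.map (fun a b hab => by simpa using congrArg Prod.snd hab)
  · exact (List.isChain_map _).mpr (hchain.imp (fun a b hab => Or.inl ⟨rfl, hab⟩))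
  · intro hne
    have hlne : l ≠ [] := by simpa using hne
    rw [List.getLast_map, List.head_map]
    exact Or.inl ⟨rfl, hwrap hlne⟩

end Aux3


theorem stmt0 {V W : Type*} [Fintype V] [Fintype W] [Nonempty V] [Nonempty W]
    (GA : V → V → Prop) (HA : W → W → Prop)
    (hG : Irreflexive GA) (hH : Irreflexive HA) :
    dichromaticNumber (cartAdj GA HA) =
      max (dichromaticNumber GA) (dichromaticNumber HA) := by
  classical
  have hGne : {k : ℕ | ∃ f : V → Fin k, IsAcyclicColoring GA f}.Nonempty :=
    ⟨Fintype.card V, (Fintype.equivFin V : V → Fin _),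
      injective_acyclicColoring (Fintype.equivFin V).injective⟩
  have hHne : {k : ℕ | ∃ f : W → Fin k, IsAcyclicColoring HA f}.Nonempty :=
    ⟨Fintype.card W, (Fintype.equivFin W : W → Fin _),
      injective_acyclicColoring (Fintype.equivFin W).injective⟩
  have hPne : {k : ℕ | ∃ f : V × W → Fin k, IsAcyclicColoring (cartAdj GA HA) f}.Nonempty :=
    ⟨Fintype.card (V × W), (Fintype.equivFin (V × W) : V × W → Fin _),
      injective_acyclicColoring (Fintype.equivFin (V × W)).injective⟩
  obtain ⟨f₀, hf₀⟩ : ∃ f : V → Fin (dichromaticNumber GA), IsAcyclicColoring GA f :=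
    Nat.sInf_mem hGne
  obtain ⟨g₀, hg₀⟩ : ∃ f : W → Fin (dichromaticNumber HA), IsAcyclicColoring HA f :=
    Nat.sInf_mem hHne
  have hapos : 0 < dichromaticNumber GA := (f₀ (Classical.arbitrary V)).pos
  apply le_antisymm
  · haveI : NeZero (max (dichromaticNumber GA) (dichromaticNumber HA)) := ⟨by omega⟩
    have hFac : IsAcyclicColoring GA
        (fun v => Fin.castLE (le_max_left (dichromaticNumber GA) (dichromaticNumber HA)) (f₀ v)) :=
      hf₀.comp _ (Fin.castLE_injective _)
    have hGac : IsAcyclicColoring HA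
        (fun w => Fin.castLE (le_max_right (dichromaticNumber GA) (dichromaticNumber HA)) (g₀ w)) :=
      hg₀.comp _ (Fin.castLE_injective _)
    exact Nat.sInf_le ⟨_, cart_coloring hG hH hFac hGac⟩
  · obtain ⟨h₀, hh₀⟩ : ∃ f : V × W → Fin (dichromaticNumber (cartAdj GA HA)),
        IsAcyclicColoring (cartAdj GA HA) f := Nat.sInf_mem hPne
    refine max_le ?_ ?_
    · exact Nat.sInf_le ⟨_, lower_left (Classical.arbitrary W) hh₀⟩
    · exact Nat.sInf_le ⟨_, lower_right (Classical.arbitrary V) hh₀⟩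
end

section
/- Let k ≥ 1 and let f₁ : V(G) → ZMod k and f₂ : V(H) → ZMod k be acyclic colorings of the digraphs G and H (every color class of f₁ is acyclic in G, every color class of f₂ is acyclic in H). Then the coloring f : V(G) × V(H) → ZMod k given by f(u,x) = f₁(u) + f₂(x) is an acyclic coloring of the cartesian product G □ H, i.e., every color class of f induces an acyclic subdigraph of G □ H. -/
open List

-- decomposition when chain' fails
lemma not_chain'_decomp {A : Type*} {P : A → A → Prop} :
    ∀ {m : List A}, ¬ m.Chain' P → ∃ a x y b, m = a ++ x :: y :: b ∧ ¬ P x y := by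
  intro m
  induction m with
  | nil => intro h; exact absurd isChain_nil h
  | cons c t ih =>
    intro h
    rw [Chain', isChain_cons] at h
    by_cases ht : t.Chain' P
    · have h' : ¬ ∀ y ∈ t.head?, P c y := fun hall => h ⟨hall, ht⟩
      push_neg at h'
      obtain ⟨y, hy, hxy⟩ := h'
      cases t with
      | nil => simp at hy
      | cons z t' =>
        simp at hy; subst hy
        exact ⟨[], c, z, t', rfl, hxy⟩
    · obtain ⟨a, x, y, b, rfl, hp⟩ := ih ht
      exact ⟨c :: a, x, y, b, rfl, hp⟩

lemma chain'_mem {A : Type*} {R : A → A → Prop} {l : List A} (h : l.Chain' R) :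
    l.Chain' (fun a b => a ∈ l ∧ b ∈ l ∧ R a b) := by
  induction l with
  | nil => exact isChain_nil
  | cons c t ih =>
    rw [Chain', isChain_cons] at h ⊢
    refine ⟨fun y hy => ⟨mem_cons_self, ?_, h.1 y hy⟩, ?_⟩
    · cases t with
      | nil => simp at hy
      | cons z t' => simp at hy; subst hy; simp
    · exact (ih h.2).imp fun a b ⟨h1, h2, h3⟩ => ⟨mem_cons_of_mem _ h1, mem_cons_of_mem _ h2, h3⟩

lemma chain'_const_s1 {A B : Type*} {g : A → B} :
    ∀ {l : List A}, l.Chain' (fun a b => g a = g b) → ∀ hne : l ≠ [], ∀ x ∈ l, g x = g (l.head hne) := by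
  intro l
  induction l with
  | nil => intro _ hne; simp at hne
  | cons c t ih =>
    intro h _ x hx
    rw [Chain', isChain_cons] at h
    rcases mem_cons.1 hx with rfl | hx
    · rfl
    · have ht : t ≠ [] := ne_nil_of_mem hx
      rw [ih h.2 ht x hx]
      cases t with
      | nil => simp at ht
      | cons z t' => exact (h.1 z rfl).symm

lemma getLast_map' {A B : Type*} (f : A → B) :
    ∀ (l : List A) (h : l ≠ []), (l.map f).getLast (by simpa using h) = f (l.getLast h) := by
  intro l h
  have h1 := List.getLast?_eq_getLast_of_ne_nil (l := l.map f) (by simpa using h)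
  rw [List.getLast?_map, List.getLast?_eq_getLast_of_ne_nil h] at h1
  simpa using h1.symm

lemma not_nodup_decomp {A : Type*} :
    ∀ {m : List A}, ¬ m.Nodup → ∃ a x b c, m = a ++ x :: (b ++ x :: c) := by
  intro m
  induction m with
  | nil => intro h; exact absurd nodup_nil h
  | cons y t ih =>
    intro h
    rw [nodup_cons] at h
    by_cases hy : y ∈ t
    · obtain ⟨b, c, rfl⟩ := append_of_mem hy
      exact ⟨[], y, b, c, rfl⟩
    · have ht : ¬ t.Nodup := fun hn => h ⟨hy, hn⟩
      obtain ⟨a, x, b, c, rfl⟩ := ih ht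
      exact ⟨y :: a, x, b, c, rfl⟩

lemma closedWalk_dicycle {V : Type*} {R : V → V → Prop} (hirr : Irreflexive R) :
    ∀ (n : ℕ) (m : List V), m.length ≤ n → ∀ (hne : m ≠ []), m.Chain' R →
      R (m.getLast hne) (m.head hne) →
    ∃ l, (∀ v ∈ l, v ∈ m) ∧ IsDicycle R l := by
  intro n
  induction n with
  | zero => intro m hlen hne; simp [length_eq_zero_iff.symm.trans length_eq_zero_iff] at hlen; exact absurd hlen hne
  | succ n ih =>
    intro m hlen hne hc hcl
    by_cases hnd : m.Nodup
    · refine ⟨m, fun v hv => hv, ?_, hnd, hc, fun h => hcl⟩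
      match m, hne, hcl with
      | [a], _, hcl => exact absurd hcl (hirr a)
      | a :: b :: t, _, _ => simp [Nat.le_add_left]
    · obtain ⟨a, x, b, c, rfl⟩ := not_nodup_decomp hnd
      have hre : a ++ x :: (b ++ x :: c) = a ++ ((x :: b) ++ x :: c) := by simp
      rw [hre] at hc
      have hc2 := hc.right_of_append
      rw [isChain_append] at hc2
      have hcb : (x :: b).Chain' R := hc2.1
      have harc : R ((x :: b).getLast (cons_ne_nil _ _)) x := by
        refine hc2.2.2 _ ?_ x rfl
        rw [getLast?_eq_getLast_of_ne_nil (cons_ne_nil _ _)]; rfl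
      have hlen' : (x :: b).length ≤ n := by
        simp only [length_append, length_cons] at hlen ⊢
        omega
      obtain ⟨l, hmem, hcyc⟩ := ih (x :: b) hlen' (cons_ne_nil _ _) hcb harc
      refine ⟨l, fun v hv => ?_, hcyc⟩
      have := hmem v hv
      simp only [mem_append, mem_cons] at this ⊢
      tauto

lemma head_eq_of_eq {A : Type*} {l l' : List A} (e : l = l') (h : l ≠ []) :
    l.head h = l'.head (e ▸ h) := by subst e; rfl

lemma getLast_eq_of_eq {A : Type*} {l l' : List A} (e : l = l') (h : l ≠ []) :
    l.getLast h = l'.getLast (e ▸ h) := by subst e; rfl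

lemma chain'_and {A : Type*} {P Q : A → A → Prop} :
    ∀ {l : List A}, l.Chain' P → l.Chain' Q → l.Chain' (fun a b => P a b ∧ Q a b) := by
  intro l
  induction l with
  | nil => exact fun _ _ => isChain_nil
  | cons c t ih =>
    intro hp hq
    rw [Chain', isChain_cons] at hp hq ⊢
    exact ⟨fun y hy => ⟨hp.1 y hy, hq.1 y hy⟩, ih hp.2 hq.2⟩

lemma closedWalkE_dicycle {V : Type*} {R : V → V → Prop} (hirr : Irreflexive R) :
    ∀ (n : ℕ) (m : List V), m.length ≤ n → ∀ (hne : m ≠ []),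
      m.Chain' (fun a b => a = b ∨ R a b) →
      (m.getLast hne = m.head hne ∨ R (m.getLast hne) (m.head hne)) →
      (∃ x ∈ m, x ≠ m.head hne) →
    ∃ l, (∀ v ∈ l, v ∈ m) ∧ IsDicycle R l := by
  intro n
  induction n with
  | zero => intro m hlen hne; simp [length_eq_zero_iff.symm.trans length_eq_zero_iff] at hlen; exact absurd hlen hne
  | succ n ih =>
    intro m hlen hne hc hcl hnc
    by_cases hch : m.Chain' (fun a b => a ≠ b)
    · have hcR : m.Chain' R := (chain'_and hc hch).imp (by tauto)
      rcases hcl with heq | hR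
      · -- closing step is an equality: drop the last vertex
        have h2 : 2 ≤ m.length := by
          match m, hne, hnc with
          | [a], _, hnc => obtain ⟨x, hx, hxne⟩ := hnc; simp at hx; simp [hx] at hxne
          | a :: b :: t, _, _ => simp [Nat.le_add_left]
        have hm' : m.dropLast ≠ [] := by
          have := m.length_dropLast
          intro h; rw [h] at this; simp at this; omega
        have hsplit : m.dropLast ++ [m.getLast hne] = m := dropLast_append_getLast hne
        have hhead : m.dropLast.head hm' = m.head hne := by
          rw [head_eq_of_eq hsplit.symm hne, head_append_of_ne_nil hm']
        have hcd : m.dropLast.Chain' (fun a b => a = b ∨ R a b) := by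
          rw [← hsplit] at hc; exact hc.left_of_append
        have hstep : m.dropLast.getLast hm' = m.getLast hne ∨
            R (m.dropLast.getLast hm') (m.getLast hne) := by
          rw [← hsplit] at hc
          rw [Chain', isChain_append] at hc
          refine hc.2.2 _ ?_ _ rfl
          rw [getLast?_eq_getLast_of_ne_nil hm']; rfl
        have hcl' : m.dropLast.getLast hm' = m.dropLast.head hm' ∨
            R (m.dropLast.getLast hm') (m.dropLast.head hm') := by
          rw [hhead, ← heq]; exact hstep
        have hnc' : ∃ x ∈ m.dropLast, x ≠ m.dropLast.head hm' := by
          obtain ⟨x, hx, hxne⟩ := hnc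
          refine ⟨x, ?_, by rw [hhead]; exact hxne⟩
          rw [← hsplit] at hx
          rcases mem_append.1 hx with h | h
          · exact h
          · simp at h; rw [h, heq] at hxne; exact absurd rfl hxne
        have hlen' : m.dropLast.length ≤ n := by
          rw [m.length_dropLast]; omega
        obtain ⟨l, hmem, hcyc⟩ := ih m.dropLast hlen' hm' hcd hcl' hnc'
        exact ⟨l, fun v hv => (dropLast_sublist m).mem (hmem v hv), hcyc⟩
      · exact closedWalk_dicycle hirr m.length m le_rfl hne hcR hR
    · -- a repeated consecutive vertex: contract it
      obtain ⟨a, x, y, b, rfl, hxy⟩ := not_chain'_decomp hch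
      rw [not_not] at hxy
      subst hxy
      set m := a ++ x :: x :: b with hm
      have key : ∀ (h1 : (a ++ x :: b : List V) ≠ []) (h2 : m ≠ []),
          (a ++ x :: b).head h1 = m.head h2 ∧ (a ++ x :: b).getLast h1 = m.getLast h2 := by
        intro h1 h2
        constructor
        · cases a with
          | nil => rfl
          | cons p q => rfl
        · rw [getLast_append_of_ne_nil _ (cons_ne_nil _ _), getLast_append_of_ne_nil _ (cons_ne_nil _ _),
            getLast_cons (cons_ne_nil _ _)]
      have h1 : (a ++ x :: b : List V) ≠ [] := by simp
      obtain ⟨hh, hl⟩ := key h1 hne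
      have hc' : (a ++ x :: b).Chain' (fun a b => a = b ∨ R a b) := by
        rw [Chain', isChain_append] at hc ⊢
        exact ⟨hc.1, (isChain_cons_cons.1 hc.2.1).2, fun p hp q hq => hc.2.2 p hp q hq⟩
      have hcl' := hcl
      rw [← hh, ← hl] at hcl'
      have hnc' : ∃ z ∈ (a ++ x :: b : List V), z ≠ (a ++ x :: b).head h1 := by
        obtain ⟨z, hz, hzne⟩ := hnc
        refine ⟨z, ?_, by rw [hh]; exact hzne⟩
        simp only [hm, mem_append, mem_cons] at hz ⊢
        tauto
      have hlen' : (a ++ x :: b).length ≤ n := by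
        simp only [hm, length_append, length_cons] at hlen ⊢
        omega
      obtain ⟨l, hmem, hcyc⟩ := ih _ hlen' h1 hc' hcl' hnc'
      refine ⟨l, fun v hv => ?_, hcyc⟩
      have := hmem v hv
      simp only [hm, mem_append, mem_cons] at this ⊢
      tauto

lemma head_map' {A B : Type*} (f : A → B) (l : List A) (h : l ≠ []) :
    (l.map f).head (by simpa using h) = f (l.head h) := by
  cases l with
  | nil => simp at h
  | cons a t => rfl

theorem stmt1 {V W : Type*} (GA : V → V → Prop) (HA : W → W → Prop)
    (hG : Irreflexive GA) (hH : Irreflexive HA)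
    (k : ℕ) (hk : 1 ≤ k) (f₁ : V → ZMod k) (f₂ : W → ZMod k)
    (h₁ : IsAcyclicColoring GA f₁) (h₂ : IsAcyclicColoring HA f₂) :
    IsAcyclicColoring (cartAdj GA HA) (fun p : V × W => f₁ p.1 + f₂ p.2) := by
  intro c hex
  obtain ⟨l, hmemS, h2, hnd, hc, hclf⟩ := hex
  have hne : l ≠ [] := by intro h; subst h; simp at h2
  have hcl := hclf hne
  set p₀ := l.head hne with hp₀
  have hgchain : l.Chain' (fun p q => f₁ p.1 = f₁ q.1) := by
    refine (chain'_mem hc).imp ?_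
    rintro p q ⟨hp, hq, harc⟩
    have hpc : f₁ p.1 + f₂ p.2 = c := hmemS p hp
    have hqc : f₁ q.1 + f₂ q.2 = c := hmemS q hq
    rcases harc with ⟨h1, _⟩ | ⟨_, h2'⟩
    · rw [h1]
    · rw [h2'] at hpc; exact add_right_cancel (hpc.trans hqc.symm)
  have hf1 : ∀ p ∈ l, f₁ p.1 = f₁ p₀.1 := chain'_const_s1 hgchain hne
  have hf2 : ∀ p ∈ l, f₂ p.2 = f₂ p₀.2 := by
    intro p hp
    have hpc : f₁ p.1 + f₂ p.2 = c := hmemS p hp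
    have h0c : f₁ p₀.1 + f₂ p₀.2 = c := hmemS p₀ (head_mem hne)
    rw [hf1 p hp] at hpc
    exact add_left_cancel (hpc.trans h0c.symm)
  by_cases hconst : ∀ p ∈ l, p.1 = p₀.1
  · -- all first coordinates equal: project to H
    refine h₂ (f₂ p₀.2) ⟨l.map Prod.snd, ?_, by simpa using h2, ?_, ?_, ?_⟩
    · intro v hv
      obtain ⟨p, hp, rfl⟩ := mem_map.1 hv
      exact hf2 p hp
    · refine hnd.map_on ?_
      intro x hx y hy hxy
      exact Prod.ext ((hconst x hx).trans (hconst y hy).symm) hxy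
    · rw [Chain', isChain_map]
      refine (chain'_mem hc).imp ?_
      rintro p q ⟨hp, hq, ⟨_, hha⟩ | ⟨hga, _⟩⟩
      · exact hha
      · have : p.1 = q.1 := (hconst p hp).trans (hconst q hq).symm
        rw [this] at hga
        exact absurd hga (hG q.1)
    · intro h'
      rw [getLast_map' Prod.snd l hne, head_map' Prod.snd l hne]
      rcases hcl with ⟨_, hha⟩ | ⟨hga, _⟩
      · exact hha
      · have : (l.getLast hne).1 = (l.head hne).1 :=
          (hconst _ (getLast_mem hne)).trans (hconst _ (head_mem hne)).symm
        rw [this] at hga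
        exact absurd hga (hG _)
  · -- some first coordinate differs: project to G and find a cycle there
    push_neg at hconst
    obtain ⟨p, hp, hpne⟩ := hconst
    have hmne : (l.map Prod.fst) ≠ [] := by simpa using hne
    have hcm : (l.map Prod.fst).Chain' (fun a b => a = b ∨ GA a b) := by
      rw [Chain', isChain_map]
      exact hc.imp fun p q harc => by
        rcases harc with ⟨h1, _⟩ | ⟨h1, _⟩
        exacts [Or.inl h1, Or.inr h1]
    have hclm : (l.map Prod.fst).getLast hmne = (l.map Prod.fst).head hmne ∨
        GA ((l.map Prod.fst).getLast hmne) ((l.map Prod.fst).head hmne) := by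
      rw [getLast_map' Prod.fst l hne, head_map' Prod.fst l hne]
      rcases hcl with ⟨h1, _⟩ | ⟨h1, _⟩
      exacts [Or.inl h1, Or.inr h1]
    have hncm : ∃ x ∈ l.map Prod.fst, x ≠ (l.map Prod.fst).head hmne := by
      refine ⟨p.1, mem_map_of_mem hp, ?_⟩
      rw [head_map' Prod.fst l hne]
      exact hpne
    obtain ⟨l', hmem', hcyc⟩ := closedWalkE_dicycle hG (l.map Prod.fst).length _
      le_rfl hmne hcm hclm hncm
    refine h₁ (f₁ p₀.1) ⟨l', fun v hv => ?_, hcyc⟩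
    obtain ⟨q, hq, rfl⟩ := mem_map.1 (hmem' v hv)
    exact hf1 q hq
end

section
/- For all integers n, m ≥ 2, the dichromatic number of the direct product of the dicycles on n and m vertices is exactly 2: χ_a(C⃗_n × C⃗_m) = 2. -/
section Aux

/-- Along a chain in the direct product of dicycles, first coordinates increase by one. -/
lemma chain_fst {n m : ℕ} (l : List (ZMod n × ZMod m))
    (hc : l.Chain' (directAdj (dicycleAdj n) (dicycleAdj m))) :
    ∀ k (hk : k < l.length), (l.get ⟨k, hk⟩).1
      = (l.get ⟨0, Nat.lt_of_le_of_lt (Nat.zero_le _) hk⟩).1 + (k : ZMod n) := by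
  intro k
  induction k with
  | zero => intro hk; simp
  | succ k ih =>
    intro hk
    have hk' : k < l.length := Nat.lt_of_succ_lt hk
    have hkk : k < l.length - 1 := by omega
    have harc := (List.isChain_iff_getElem.mp hc) k (by omega)
    obtain ⟨h1, _⟩ := harc
    have : (l.get ⟨k + 1, hk⟩).1 = (l.get ⟨k, hk'⟩).1 + 1 := h1
    rw [this, ih hk']
    push_cast
    ring

/-- Any dicycle in the direct product contains a vertex with first coordinate 0. -/
lemma dicycle_hits_zero {n m : ℕ} (hn : 2 ≤ n) (l : List (ZMod n × ZMod m))
    (hl : IsDicycle (directAdj (dicycleAdj n) (dicycleAdj m)) l) :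
    ∃ v ∈ l, v.1 = 0 := by
  haveI : NeZero n := ⟨by omega⟩
  obtain ⟨hlen, _, hchain, hclose⟩ := hl
  have hne : l ≠ [] := by
    intro h; rw [h] at hlen; simp at hlen
  have hpos : 0 < l.length := List.length_pos_iff.mpr hne
  have hlast : l.getLast hne = l.get ⟨l.length - 1, by omega⟩ := by
    rw [List.getLast_eq_getElem]; rfl
  have hhead : l.head hne = l.get ⟨0, hpos⟩ := by
    rw [List.head_eq_getElem_zero]; rfl
  obtain ⟨h1, _⟩ := hclose hne
  -- h1 : (l.head hne).1 = (l.getLast hne).1 + 1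
  rw [hhead, hlast] at h1
  rw [chain_fst l hchain (l.length - 1) (by omega)] at h1
  have hdvd : ((l.length : ℕ) : ZMod n) = 0 := by
    have : ((l.length - 1 : ℕ) : ZMod n) + 1 = ((l.length : ℕ) : ZMod n) := by
      have : l.length - 1 + 1 = l.length := by omega
      rw [← this]; push_cast; ring
    have h2 : (l.get ⟨0, hpos⟩).1 = (l.get ⟨0, hpos⟩).1 + ((l.length - 1 : ℕ) : ZMod n) + 1 := h1
    rw [add_assoc, this] at h2
    exact (left_eq_add).mp h2
  have hndvd : n ∣ l.length := (ZMod.natCast_eq_zero_iff _ _).mp hdvd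
  have hnle : n ≤ l.length := Nat.le_of_dvd (by omega) hndvd
  set a := (l.get ⟨0, hpos⟩).1 with ha
  set k := (-a).val with hkdef
  have hk : k < l.length := lt_of_lt_of_le (ZMod.val_lt _) hnle
  refine ⟨l.get ⟨k, hk⟩, List.get_mem _ _, ?_⟩
  rw [chain_fst l hchain k hk, ← ha, hkdef, ZMod.natCast_zmod_val]
  ring

/-- The diagonal dicycle in the direct product. -/
lemma diag_dicycle {n m : ℕ} (hn : 2 ≤ n) (hm : 2 ≤ m) :
    IsDicycle (directAdj (dicycleAdj n) (dicycleAdj m))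
      ((List.range (Nat.lcm n m)).map (fun k : ℕ => ((k : ZMod n), (k : ZMod m)))) := by
  set L := Nat.lcm n m with hL
  have hnL : n ∣ L := Nat.dvd_lcm_left n m
  have hmL : m ∣ L := Nat.dvd_lcm_right n m
  have hLpos : 0 < L := Nat.pos_of_ne_zero (Nat.lcm_ne_zero (by omega) (by omega))
  have hL2 : 2 ≤ L := le_trans hn (Nat.le_of_dvd hLpos hnL)
  set f : ℕ → ZMod n × ZMod m := fun k : ℕ => ((k : ZMod n), (k : ZMod m)) with hf
  have hlen : ((List.range L).map f).length = L := by simp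
  refine ⟨by rw [hlen]; exact hL2, ?_, ?_, ?_⟩
  · refine List.Nodup.map_on ?_ (List.nodup_range (n := L))
    intro x hx y hy hxy
    rw [List.mem_range] at hx hy
    have h1 : (x : ZMod n) = (y : ZMod n) := congrArg Prod.fst hxy
    have h2 : (x : ZMod m) = (y : ZMod m) := congrArg Prod.snd hxy
    have d1 : x ≡ y [MOD n] := (ZMod.natCast_eq_natCast_iff _ _ _).mp h1
    have d2 : x ≡ y [MOD m] := (ZMod.natCast_eq_natCast_iff _ _ _).mp h2
    rcases le_total x y with h | h
    · have e1 := (Nat.modEq_iff_dvd' h).mp d1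
      have e2 := (Nat.modEq_iff_dvd' h).mp d2
      rcases Nat.eq_zero_of_dvd_of_lt (Nat.lcm_dvd e1 e2) (by omega) with h0
      omega
    · have e1 := (Nat.modEq_iff_dvd' h).mp d1.symm
      have e2 := (Nat.modEq_iff_dvd' h).mp d2.symm
      rcases Nat.eq_zero_of_dvd_of_lt (Nat.lcm_dvd e1 e2) (by omega) with h0
      omega
  · refine List.isChain_iff_getElem.mpr ?_
    intro i hi
    rw [hlen] at hi
    have hgi : ((List.range L).map f).get ⟨i, by rw [hlen]; omega⟩ = f i := by
      simp
    have hgi1 : ((List.range L).map f).get ⟨i + 1, by rw [hlen]; omega⟩ = f (i + 1) := by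
      simp
    simp only [List.getElem_map, List.getElem_range]
    constructor
    · show ((i + 1 : ℕ) : ZMod n) = (i : ZMod n) + 1; push_cast; ring
    · show ((i + 1 : ℕ) : ZMod m) = (i : ZMod m) + 1; push_cast; ring
  · intro h
    have hlast : ((List.range L).map f).getLast h
        = f (L - 1) := by
      rw [List.getLast_eq_getElem]
      simp [hlen]
    have hhead : ((List.range L).map f).head h = f 0 := by
      rw [List.head_eq_getElem_zero]
      simp
    rw [hlast, hhead]
    constructor
    · show ((0 : ℕ) : ZMod n) = ((L - 1 : ℕ) : ZMod n) + 1
      have : ((L - 1 : ℕ) : ZMod n) + 1 = ((L : ℕ) : ZMod n) := by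
        have h' : L - 1 + 1 = L := by omega
        rw [← h']; push_cast; ring
      rw [this, (ZMod.natCast_eq_zero_iff _ _).mpr hnL]
      simp
    · show ((0 : ℕ) : ZMod m) = ((L - 1 : ℕ) : ZMod m) + 1
      have : ((L - 1 : ℕ) : ZMod m) + 1 = ((L : ℕ) : ZMod m) := by
        have h' : L - 1 + 1 = L := by omega
        rw [← h']; push_cast; ring
      rw [this, (ZMod.natCast_eq_zero_iff _ _).mpr hmL]
      simp

end Aux

theorem stmt5 (n m : ℕ) (hn : 2 ≤ n) (hm : 2 ≤ m) :
    dichromaticNumber (directAdj (dicycleAdj n) (dicycleAdj m)) = 2 := by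
  haveI : NeZero n := ⟨by omega⟩
  haveI : NeZero m := ⟨by omega⟩
  have h2 : 2 ∈ {k : ℕ | ∃ f : ZMod n × ZMod m → Fin k,
      IsAcyclicColoring (directAdj (dicycleAdj n) (dicycleAdj m)) f} := by
    refine ⟨fun p => if p.1 = 0 then 0 else 1, ?_⟩
    intro c ⟨l, hmem, hdc⟩
    obtain ⟨v, hv, hv0⟩ := dicycle_hits_zero hn l hdc
    by_cases hc : c = 0
    · -- all vertices in l have first coord 0; but arcs need first coord to advance
      obtain ⟨hlen, _, hchain, _⟩ := hdc
      have h01 : 0 < l.length - 1 := by omega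
      have harc := (List.isChain_iff_getElem.mp hchain) 0 (by omega)
      obtain ⟨ha1, _⟩ := harc
      have hm0 : (l.get ⟨0, by omega⟩).1 = 0 := by
        have := hmem _ (List.get_mem l ⟨0, by omega⟩)
        simp only [Set.mem_preimage, Set.mem_singleton_iff, hc] at this
        by_contra hne
        rw [if_neg hne] at this
        exact absurd this (by decide)
      have hm1 : (l.get ⟨1, by omega⟩).1 = 0 := by
        have := hmem _ (List.get_mem l ⟨1, by omega⟩)
        simp only [Set.mem_preimage, Set.mem_singleton_iff, hc] at this
        by_contra hne
        rw [if_neg hne] at this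
        exact absurd this (by decide)
      have ha1' : (l.get ⟨1, by omega⟩).1 = (l.get ⟨0, by omega⟩).1 + 1 := ha1
      rw [hm0, hm1] at ha1'
      have h10 : ((1 : ℕ) : ZMod n) = 0 := by simpa using ha1'.symm
      rw [ZMod.natCast_eq_zero_iff] at h10
      have := Nat.le_of_dvd one_pos h10
      omega
    · -- color class is {p | p.1 ≠ 0}, but l contains v with v.1 = 0
      have := hmem v hv
      simp only [Set.mem_preimage, Set.mem_singleton_iff, hv0, if_pos] at this
      exact hc this.symm
  apply le_antisymm
  · exact Nat.sInf_le h2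
  · apply le_csInf ⟨2, h2⟩
    intro k hk
    by_contra hlt
    push_neg at hlt
    interval_cases k
    · obtain ⟨f, _⟩ := hk
      exact (f (0, 0)).elim0
    · obtain ⟨f, hf⟩ := hk
      have hf0 : ∀ v, f v = 0 := fun v => Subsingleton.elim _ _
      exact hf 0 ⟨_, fun v _ => by simp [hf0], diag_dicycle hn hm⟩
end

section
/- Let ι be a nonempty finite index type and let n : ι → ℕ with n i ≥ 2 for every i. The direct product over ι of the dicycles C⃗_{n i} — namely the digraph on the product type Π i, ZMod (n i) with an arc from f to g iff for every i there is an arc from f i to g i in C⃗_{n i} — has dichromatic number exactly 2. -/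
theorem stmt6 {ι : Type*} [Fintype ι] [Nonempty ι]
    (n : ι → ℕ) (hn : ∀ i, 2 ≤ n i) :
    dichromaticNumber
      (fun f g : (∀ i, ZMod (n i)) => ∀ i, dicycleAdj (n i) (f i) (g i)) = 2 := by
  classical
  have hNZ : ∀ i, NeZero (n i) := fun i => ⟨by have := hn i; omega⟩
  set V := ∀ i, ZMod (n i) with hV
  set Adj : V → V → Prop := fun f g => ∀ i, dicycleAdj (n i) (f i) (g i) with hAdj
  -- key structural lemma about dicycles
  have key : ∀ (l : List V), IsDicycle Adj l → ∀ i : ι,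
      (∀ k (hk : k < l.length), (l.get ⟨k, hk⟩) i
        = (l.get ⟨0, by omega⟩) i + (k : ZMod (n i))) ∧
      (l.length : ZMod (n i)) = 0 := by
    intro l hl i
    obtain ⟨hlen, hnd, hch, hcl⟩ := hl
    have h0 : 0 < l.length := by omega
    have hget : ∀ k (hk : k < l.length), (l.get ⟨k, hk⟩) i
        = (l.get ⟨0, h0⟩) i + (k : ZMod (n i)) := by
      intro k
      induction k with
      | zero => intro hk; simp
      | succ m ih =>
        intro hk
        have hm : m < l.length := by omega
        have hadj : dicycleAdj (n i) ((l.get ⟨m, hm⟩) i) ((l.get ⟨m + 1, hk⟩) i) := (List.isChain_iff_getElem.mp hch m (by omega)) i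
        rw [dicycleAdj] at hadj
        rw [hadj, ih hm]
        push_cast
        ring
    refine ⟨hget, ?_⟩
    have hne : l ≠ [] := by intro h; simp [h] at hlen
    have hlast := hcl hne i
    rw [dicycleAdj] at hlast
    have hl1 : l.getLast hne = l.get ⟨l.length - 1, by omega⟩ := List.getLast_eq_getElem hne
    have hh : l.head hne = l.get ⟨0, h0⟩ := by
      cases l with
      | nil => simp at hne
      | cons a t => rfl
    rw [hl1, hh, hget (l.length - 1) (by omega)] at hlast
    have hc : ((l.length - 1 : ℕ) : ZMod (n i)) + 1 = (l.length : ZMod (n i)) := by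
      rw [← Nat.cast_succ]; congr 1; omega
    rw [add_assoc, hc] at hlast
    exact left_eq_add.mp hlast
  -- the 2-coloring
  obtain ⟨i0⟩ := ‹Nonempty ι›
  haveI := hNZ i0
  haveI : Fact (1 < n i0) := ⟨hn i0⟩
  have h2 : ∃ f : V → Fin 2, IsAcyclicColoring Adj f := by
    refine ⟨fun v => if v i0 = 0 then 0 else 1, ?_⟩
    intro c ⟨l, hmem, hl⟩
    have hlen := hl.1
    by_cases hc0 : c = 0
    · -- color class 0 : coordinate i0 equals 0, no arcs possible
      subst hc0
      have hmem' : ∀ v ∈ l, v i0 = 0 := by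
        intro v hv
        have := hmem v hv
        simp only [Set.mem_preimage, Set.mem_singleton_iff] at this
        by_contra h
        simp [h] at this
      have h0 : 0 < l.length := by omega
      have h1 : 1 < l.length := by omega
      have hadj : dicycleAdj (n i0) ((l.get ⟨0, h0⟩) i0) ((l.get ⟨1, h1⟩) i0) := (List.isChain_iff_getElem.mp hl.2.2.1 0 (by omega)) i0
      rw [dicycleAdj] at hadj
      rw [hmem' _ (l.get_mem ⟨0, h0⟩), hmem' _ (l.get_mem ⟨1, h1⟩)] at hadj
      simp at hadj
    · -- color class 1 : coordinate i0 never 0, but cycle covers all residues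
      have hmem' : ∀ v ∈ l, v i0 ≠ 0 := by
        intro v hv
        have := hmem v hv
        simp only [Set.mem_preimage, Set.mem_singleton_iff] at this
        intro h
        simp [h] at this
        exact hc0 this.symm
      obtain ⟨hget, hlz⟩ := key l hl i0
      have hdvd : n i0 ∣ l.length := (ZMod.natCast_eq_zero_iff _ _).mp hlz
      have hle : n i0 ≤ l.length := Nat.le_of_dvd (by omega) hdvd
      set a : ZMod (n i0) := (l.get ⟨0, by omega⟩) i0 with ha
      have hk : (-a).val < l.length := lt_of_lt_of_le (ZMod.val_lt _) hle
      have hval : (((-a).val : ℕ) : ZMod (n i0)) = -a := by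
        rw [ZMod.natCast_val, ZMod.cast_id]
      have h0' : (l.get ⟨(-a).val, hk⟩) i0 = 0 := by
        rw [hget (-a).val hk, ← ha, hval]; ring
      exact hmem' _ (l.get_mem ⟨_, hk⟩) h0'
  -- the big dicycle for the lower bound
  set N : ℕ := Finset.univ.lcm n with hN
  have hdvd : ∀ i, n i ∣ N := fun i => Finset.dvd_lcm (Finset.mem_univ i)
  have hN0 : N ≠ 0 := by
    rw [hN, Ne, Finset.lcm_eq_zero_iff]
    rintro ⟨i, -, hi⟩
    have := hn i
    omega
  have hN2 : 2 ≤ N := le_trans (hn i0) (Nat.le_of_dvd (by omega) (hdvd i0))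
  set v : ℕ → V := fun t => fun i => (t : ZMod (n i)) with hv
  have hinj : ∀ s t : ℕ, s < N → t < N → v s = v t → s = t := by
    have hd : ∀ s t : ℕ, s ≤ t → t < N → v s = v t → s = t := by
      intro s t hst htN hvst
      have hdv : N ∣ t - s := by
        refine Finset.lcm_dvd fun i _ => ?_
        have hi : (s : ZMod (n i)) = (t : ZMod (n i)) := congrFun hvst i
        haveI := hNZ i
        have : ((t - s : ℕ) : ZMod (n i)) = 0 := by
          rw [Nat.cast_sub hst, ← hi, sub_self]
        exact (ZMod.natCast_eq_zero_iff _ _).mp this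
      rcases Nat.eq_zero_or_pos (t - s) with h | h
      · omega
      · have := Nat.le_of_dvd h hdv; omega
    intro s t hs ht hvst
    rcases le_total s t with h | h
    · exact hd s t h ht hvst
    · exact (hd t s h hs hvst.symm).symm
  set L : List V := (List.range N).map v with hL
  have hLlen : L.length = N := by simp [hL]
  have hLget : ∀ k (hk : k < L.length), L.get ⟨k, hk⟩ = v k := by
    intro k hk
    simp [hL]
  have hcyc : IsDicycle Adj L := by
    refine ⟨by omega, ?_, ?_, ?_⟩
    · refine List.Nodup.map_on ?_ List.nodup_range
      intro s hs t ht hvst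
      exact hinj s t (List.mem_range.mp hs) (List.mem_range.mp ht) hvst
    · show L.IsChain Adj; rw [List.isChain_iff_getElem]
      intro k hk i
      rw [show L[k] = v k from hLget k (by omega), show L[k + 1] = v (k + 1) from hLget (k + 1) (by omega)]
      show ((k + 1 : ℕ) : ZMod (n i)) = (k : ZMod (n i)) + 1
      push_cast; ring
    · intro h i
      have hne : L.length - 1 < L.length := by omega
      rw [List.getLast_eq_getElem, show L[L.length - 1] = L.get ⟨L.length - 1, hne⟩ from rfl, hLget _ hne]
      have hhead : ∀ (l : List V) (h : l ≠ []) (h0 : 0 < l.length),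
          l.head h = l.get ⟨0, h0⟩ := by
        intro l h h0
        cases l with
        | nil => simp at h
        | cons a t => rfl
      rw [hhead L h (by omega), hLget 0 (by omega)]
      show ((0 : ℕ) : ZMod (n i)) = ((L.length - 1 : ℕ) : ZMod (n i)) + 1
      haveI := hNZ i
      have : ((L.length - 1 : ℕ) : ZMod (n i)) + 1 = ((L.length : ℕ) : ZMod (n i)) := by
        rw [← Nat.cast_succ]; congr 1; omega
      rw [this, hLlen]
      rw [Nat.cast_zero, eq_comm, ZMod.natCast_eq_zero_iff]
      exact hdvd i
  -- now compute the sInf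
  have h1not : ¬ ∃ f : V → Fin 1, IsAcyclicColoring Adj f := by
    rintro ⟨f, hf⟩
    refine hf (f (v 0)) ⟨L, fun w hw => ?_, hcyc⟩
    simp only [Set.mem_preimage, Set.mem_singleton_iff]
    exact Subsingleton.elim _ _
  have h0not : ¬ ∃ f : V → Fin 0, IsAcyclicColoring Adj f := by
    rintro ⟨f, -⟩
    exact (f (v 0)).elim0
  refine le_antisymm (Nat.sInf_le h2) ?_
  show 2 ≤ sInf {k : ℕ | ∃ f : V → Fin k, IsAcyclicColoring Adj f}
  by_contra h
  push_neg at h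
  have hmem := Nat.sInf_mem (⟨2, h2⟩ : {k : ℕ | ∃ f : V → Fin k, IsAcyclicColoring Adj f}.Nonempty)
  have hcases : sInf {k : ℕ | ∃ f : V → Fin k, IsAcyclicColoring Adj f} = 0 ∨
      sInf {k : ℕ | ∃ f : V → Fin k, IsAcyclicColoring Adj f} = 1 := by omega
  rcases hcases with h01 | h01 <;> rw [h01] at hmem
  · exact h0not hmem
  · exact h1not hmem
end

section
/- Let n ≥ 2 be an integer and let H be a bipartite simple graph with at least one edge. Then the chromatic number of the strong product of H with the odd cycle on 2n+1 vertices equals 5: χ(H ⊠ C_{2n+1}) = 5. -/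
open SimpleGraph

/-- Strong product of simple graphs. -/
def strongProd {α β : Type*} (G : SimpleGraph α) (H : SimpleGraph β) :
    SimpleGraph (α × β) where
  Adj p q := p ≠ q ∧ (p.1 = q.1 ∨ G.Adj p.1 q.1) ∧ (p.2 = q.2 ∨ H.Adj p.2 q.2)
  symm := by
    constructor
    rintro p q ⟨hne, h1, h2⟩
    refine ⟨fun h => hne h.symm, ?_, ?_⟩
    · rcases h1 with h | h
      · exact Or.inl h.symm
      · exact Or.inr h.symm
    · rcases h2 with h | h
      · exact Or.inl h.symm
      · exact Or.inr h.symm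
  loopless := ⟨fun p h => h.1 rfl⟩

/-- helper for mods -/
lemma mod_helper {d N : ℕ} (_hN : 1 < N) (hd : d < 2*N) (h : d % N = 1) : d = 1 ∨ d = N + 1 := by
  rcases lt_or_ge d N with h1 | h1
  · left; rwa [Nat.mod_eq_of_lt h1] at h
  · right; rw [Nat.mod_eq_sub_mod h1, Nat.mod_eq_of_lt (by omega)] at h; omega

/-- cycle adjacency in terms of values -/
lemma cycle_adj_val {n : ℕ} (hn : 1 ≤ n) {i j : Fin (2*n+1)}
    (h : (SimpleGraph.cycleGraph (2*n+1)).Adj i j) :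
    j.val = i.val + 1 ∨ i.val = j.val + 1 ∨ (i.val = 0 ∧ j.val = 2*n) ∨
      (j.val = 0 ∧ i.val = 2*n) := by
  rw [SimpleGraph.cycleGraph_adj'] at h
  have hi := i.isLt
  have hj := j.isLt
  rcases h with h | h
  · rw [Fin.sub_def] at h
    simp only at h
    rcases mod_helper (by omega) (by omega) h with h | h <;> omega
  · rw [Fin.sub_def] at h
    simp only at h
    rcases mod_helper (by omega) (by omega) h with h | h <;> omega

lemma bool_helper : ∀ a b c : Bool, a ≠ b → ((a = c) ↔ ¬ (b = c)) := by decide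

/-- an odd cycle admits no proper 2-coloring (with Bool colors) -/
lemma odd_cycle_no_two_coloring (n : ℕ) (hn : 1 ≤ n) (g : Fin (2*n+1) → Bool)
    (hg : ∀ i j, (SimpleGraph.cycleGraph (2*n+1)).Adj i j → g i ≠ g j) : False := by
  -- adjacency of consecutive vertices
  have hadj : ∀ m : ℕ, (hm : m < 2*n) →
      (SimpleGraph.cycleGraph (2*n+1)).Adj ⟨m, by omega⟩ ⟨m+1, by omega⟩ := by
    intro m hm
    rw [SimpleGraph.cycleGraph_adj']
    right
    rw [Fin.sub_def]
    simp only
    rw [show (2*n+1 - m) + (m+1) = (2*n+1) + 1 by omega, Nat.add_mod_left]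
    exact Nat.mod_eq_of_lt (by omega)
  have hwrap : (SimpleGraph.cycleGraph (2*n+1)).Adj ⟨0, by omega⟩ ⟨2*n, by omega⟩ := by
    rw [SimpleGraph.cycleGraph_adj']
    left
    rw [Fin.sub_def]
    simp only
    rw [Nat.add_zero, show (2*n+1 - 2*n) = 1 by omega]
    exact Nat.mod_eq_of_lt (by omega)
  have key : ∀ m : ℕ, (hm : m ≤ 2*n) →
      ((g ⟨m, by omega⟩ = g ⟨0, by omega⟩) ↔ m % 2 = 0) := by
    intro m
    induction m with
    | zero => simp
    | succ m ih =>
      intro hm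
      have h1 := hg _ _ (hadj m (by omega))
      have h2 := ih (by omega)
      have h3 := bool_helper (g ⟨m+1, by omega⟩) (g ⟨m, by omega⟩) (g ⟨0, by omega⟩)
        (Ne.symm h1)
      rw [h3, h2]
      omega
  have h1 := (key (2*n) le_rfl).mpr (by omega)
  exact hg _ _ hwrap (by rw [h1])

/-- helper over Fin 4 -/
lemma fin4_helper : ∀ a b c d x : Fin 4, a ≠ b → a ≠ c → a ≠ d → b ≠ c → b ≠ d → c ≠ d →
    ((a = x ∨ b = x) ↔ ¬ (c = x ∨ d = x)) := by decide

/-- the color function for the 5-coloring -/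
def cfun (N i t : ℕ) : ℕ := if i + 4 ≤ N then 2 * (i % 2) + t else (2 * (i + 4 - N) + t) % 5

lemma cfun_lt (N i t : ℕ) (ht : t < 2) : cfun N i t < 5 := by
  unfold cfun
  split_ifs
  · omega
  · exact Nat.mod_lt _ (by norm_num)

theorem stmt8 {α : Type*} [Fintype α] (n : ℕ) (hn : 2 ≤ n) (H : SimpleGraph α)
    (hbip : H.Colorable 2) (hedge : ∃ u v, H.Adj u v) :
    (strongProd H (SimpleGraph.cycleGraph (2 * n + 1))).chromaticNumber = 5 := by
  set G := strongProd H (SimpleGraph.cycleGraph (2 * n + 1)) with hG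
  obtain ⟨b⟩ := hbip
  obtain ⟨u, v, huv⟩ := hedge
  -- upper bound : a 5-coloring
  have hub : G.Colorable 5 := by
    refine ⟨SimpleGraph.Coloring.mk
      (fun p => ⟨cfun (2*n) p.2.val (b p.1).val, cfun_lt _ _ _ (b p.1).isLt⟩) ?_⟩
    rintro ⟨a, i⟩ ⟨a', j⟩ ⟨hne, h1, h2⟩ hcol
    simp only [Fin.mk.injEq] at hcol
    have hti := (b a).isLt
    have htj := (b a').isLt
    rcases h2 with h2 | h2
    · -- same cycle coordinate
      simp only at h2
      subst h2
      simp only [cfun] at hcol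
      have ha : a ≠ a' := fun h => hne (by simp [h])
      have hadj : H.Adj a a' := h1.resolve_left ha
      have hb := b.valid hadj
      have : (b a).val ≠ (b a').val := fun h => hb (Fin.ext h)
      split_ifs at hcol <;> omega
    · -- adjacent cycle coordinates
      simp only at h2
      have hrel := cycle_adj_val (by omega) h2
      have hi := i.isLt
      have hj := j.isLt
      simp only [cfun] at hcol
      split_ifs at hcol <;> omega
  -- lower bound : no 4-coloring
  have hlb : ¬ G.Colorable 4 := by
    rintro ⟨C⟩
    have hune : u ≠ v := H.ne_of_adj huv
    -- adjacency facts in the strong product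
    have adjSame : ∀ i : Fin (2*n+1), G.Adj (u, i) (v, i) := by
      intro i
      exact ⟨fun h => hune (congrArg Prod.fst h), Or.inr huv, Or.inl rfl⟩
    have adjCross : ∀ (x y : α) (i j : Fin (2*n+1)),
        (x = y ∨ H.Adj x y) → (SimpleGraph.cycleGraph (2*n+1)).Adj i j → G.Adj (x, i) (y, j) := by
      intro x y i j hxy hij
      exact ⟨fun h => hij.ne (congrArg Prod.snd h), hxy, Or.inr hij⟩
    set x := C (u, (0 : Fin (2*n+1))) with hx
    have : False := by
      apply odd_cycle_no_two_coloring n (by omega)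
        (fun i => decide (C (u, i) = x ∨ C (v, i) = x))
      intro i j hij
      have hab := C.valid (adjSame i)
      have hcd := C.valid (adjSame j)
      have hac := C.valid (adjCross u u i j (Or.inl rfl) hij)
      have had := C.valid (adjCross u v i j (Or.inr huv) hij)
      have hbc := C.valid (adjCross v u i j (Or.inr huv.symm) hij)
      have hbd := C.valid (adjCross v v i j (Or.inl rfl) hij)
      have hiff := fin4_helper _ _ _ _ x hab hac had hbc hbd hcd
      intro h
      rw [decide_eq_decide] at h
      rw [h] at hiff
      exact iff_not_self hiff
    exact this
  -- conclude
  refine le_antisymm ?_ ?_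
  · exact_mod_cast hub.chromaticNumber_le
  · by_contra h
    push_neg at h
    have hne : G.chromaticNumber ≠ ⊤ := fun ht => by rw [ht] at h; exact absurd h (by simp)
    obtain ⟨m, hm⟩ := WithTop.ne_top_iff_exists.mp hne
    rw [← hm] at h
    have hm5 : m < 5 := by
      have h' : ((m:ℕ):ℕ∞) < ((5:ℕ):ℕ∞) := by exact h
      exact Nat.cast_lt.mp h'
    have : G.Colorable m := SimpleGraph.chromaticNumber_le_iff_colorable.mp (le_of_eq hm.symm)
    exact hlb (this.mono (by omega))
end

section
/- The dichromatic numbers of the strong products C⃗_3 ⊠ C⃗_2 and C⃗_3 ⊠ C⃗_3 of dicycles are both equal to 3: χ_a(C⃗_3 ⊠ C⃗_2) = 3 and χ_a(C⃗_3 ⊠ C⃗_3) = 3. -/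
section Aux

variable {V C : Type*}

instance (priority := 2000) decChainAux {α : Type*} {R : α → α → Prop} [DecidableRel R] :
    ∀ (a : α) (l : List α), Decidable (List.Chain R a l)
  | _, [] => isTrue List.Chain.nil
  | a, b :: l =>
    @decidable_of_iff _ _ List.chain_cons.symm (@instDecidableAnd _ _ _ (decChainAux b l))

instance (priority := 2000) decChain'Aux {α : Type*} {R : α → α → Prop} [DecidableRel R] :
    ∀ l : List α, Decidable (List.Chain' R l)
  | [] => isTrue List.isChain_nil
  | a :: l => inferInstanceAs (Decidable (List.Chain R a l))

instance {n : ℕ} : DecidableRel (dicycleAdj n) := fun i j => decEq j (i + 1)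

instance {W : Type*} (GA : V → V → Prop) (HA : W → W → Prop) [DecidableRel GA]
    [DecidableRel HA] [DecidableEq V] [DecidableEq W] :
    DecidableRel (strongAdj GA HA) := fun p q =>
  inferInstanceAs (Decidable ((p.1 = q.1 ∧ HA p.2 q.2) ∨ (GA p.1 q.1 ∧ p.2 = q.2) ∨
    (GA p.1 q.1 ∧ HA p.2 q.2)))

instance decLastAdj (Adj : V → V → Prop) [DecidableEq V] [DecidableRel Adj] (l : List V) :
    Decidable (∀ h : l ≠ [], Adj (l.getLast h) (l.head h)) :=
  if hl : l = [] then isTrue fun h => absurd hl h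
  else decidable_of_iff (Adj (l.getLast hl) (l.head hl)) ⟨fun ha _ => ha, fun h => h hl⟩

instance (Adj : V → V → Prop) [DecidableEq V] [DecidableRel Adj] (l : List V) :
    Decidable (IsDicycle Adj l) :=
  inferInstanceAs (Decidable (2 ≤ l.length ∧ l.Nodup ∧ l.Chain' Adj ∧
    ∀ h : l ≠ [], Adj (l.getLast h) (l.head h)))

lemma chain'_imp_mem {R S : V → V → Prop} :
    ∀ {l : List V}, (∀ a ∈ l, ∀ b ∈ l, R a b → S a b) → l.Chain' R → l.Chain' S
  | [], _, _ => List.isChain_nil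
  | [_], _, _ => List.isChain_singleton _
  | a :: b :: t, h, hc => by
    rw [List.Chain', List.isChain_cons_cons] at hc ⊢
    refine ⟨h a (by simp) b (by simp) hc.1, chain'_imp_mem (fun x hx y hy hr =>
      h x (List.mem_cons_of_mem _ hx) y (List.mem_cons_of_mem _ hy) hr) hc.2⟩

lemma isAcyclicColoring_of_order (Adj : V → V → Prop) (f : V → C) (g : V → ℕ)
    (h : ∀ a b, f a = f b → Adj a b → g a < g b) : IsAcyclicColoring Adj f := by
  rintro c ⟨l, hmem, hlen, _, hchain, hlast⟩
  have hfc : ∀ v ∈ l, f v = c := fun v hv => hmem v hv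
  have hg : l.Chain' (fun a b => g a < g b) :=
    chain'_imp_mem (fun x hx y hy hr => h x y ((hfc x hx).trans (hfc y hy).symm) hr) hchain
  obtain ⟨a, t, rfl⟩ : ∃ a t, l = a :: t := by
    cases l with
    | nil => simp at hlen
    | cons a t => exact ⟨a, t, rfl⟩
  have ht : t ≠ [] := by
    rintro rfl; simp at hlen
  have hne : a :: t ≠ [] := by simp
  haveI : IsTrans V (fun a b => g a < g b) := ⟨fun _ _ _ h1 h2 => h1.trans h2⟩
  have hp := List.isChain_iff_pairwise.mp hg
  have h1 : g a < g ((a :: t).getLast hne) := by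
    rw [List.getLast_cons ht]
    exact (List.pairwise_cons.mp hp).1 _ (List.getLast_mem ht)
  have h2 : g ((a :: t).getLast hne) < g a := by
    have := hlast hne
    have hfe : f ((a :: t).getLast hne) = f ((a :: t).head hne) :=
      (hfc _ (List.getLast_mem hne)).trans (hfc _ (List.head_mem hne)).symm
    simpa using h _ _ hfe this
  omega

lemma not_acyclicColoring_of_mono [Inhabited V] (Adj : V → V → Prop) (f : V → C)
    (l : List V) (hd : IsDicycle Adj l) (hm : ∀ v ∈ l, f v = f l.headI) :
    ¬ IsAcyclicColoring Adj f := fun h =>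
  h (f l.headI) ⟨l, fun v hv => hm v hv, hd⟩

lemma no_small_coloring (Adj : V → V → Prop)
    (h2 : ∀ f : V → Fin 2, ¬ IsAcyclicColoring Adj f) :
    ∀ k, k ≤ 2 → ∀ f : V → Fin k, ¬ IsAcyclicColoring Adj f := by
  intro k hk f hf
  refine h2 (Fin.castLE hk ∘ f) ?_
  rintro c ⟨l, hmem, hcyc⟩
  have hne : l ≠ [] := by rintro rfl; simpa using hcyc.1
  refine hf (f (l.head hne)) ⟨l, fun v hv => ?_, hcyc⟩
  have h1 : Fin.castLE hk (f v) = c := hmem v hv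
  have h2' : Fin.castLE hk (f (l.head hne)) = c := hmem _ (List.head_mem hne)
  exact (Fin.castLE_injective hk) (h1.trans h2'.symm)

lemma dichromatic_eq_three (Adj : V → V → Prop)
    (h3 : ∃ f : V → Fin 3, IsAcyclicColoring Adj f)
    (h2 : ∀ f : V → Fin 2, ¬ IsAcyclicColoring Adj f) :
    dichromaticNumber Adj = 3 := by
  have hmem : ∀ k ∈ {k : ℕ | ∃ f : V → Fin k, IsAcyclicColoring Adj f}, 3 ≤ k := by
    rintro k ⟨f, hf⟩
    by_contra h
    exact no_small_coloring Adj h2 k (by omega) f hf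
  exact le_antisymm (Nat.sInf_le h3) (hmem _ (Nat.sInf_mem ⟨3, h3⟩))

def f1 : ZMod 3 × ZMod 2 → Fin 3 := fun p =>
  if p = (0,0) then 0 else if p = (0,1) then 1 else if p = (1,0) then 0
  else if p = (1,1) then 2 else if p = (2,0) then 1 else 2

def g1 : ZMod 3 × ZMod 2 → ℕ := fun p =>
  if p = (0,0) then 0 else if p = (1,0) then 1 else if p = (2,0) then 0
  else if p = (0,1) then 1 else if p = (1,1) then 0 else 1

def f2 : ZMod 3 × ZMod 3 → Fin 3 := fun p =>
  if p = (0,0) then 0 else if p = (0,1) then 0 else if p = (0,2) then 1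
  else if p = (1,0) then 0 else if p = (1,1) then 0 else if p = (1,2) then 1
  else if p = (2,0) then 1 else if p = (2,1) then 2 else 2

def g2 : ZMod 3 × ZMod 3 → ℕ := fun p =>
  if p = (0,0) then 0 else if p = (0,1) then 1 else if p = (1,0) then 2
  else if p = (1,1) then 3 else if p = (0,2) then 0 else if p = (1,2) then 1
  else if p = (2,0) then 2 else if p = (2,1) then 0 else 1

def cycles1 : List (List (ZMod 3 × ZMod 2)) :=
  [[(0,0),(0,1)], [(1,0),(1,1)], [(2,0),(2,1)],
   [(0,0),(1,0),(2,0)], [(0,0),(1,0),(2,1)], [(0,0),(1,1),(2,0)], [(0,0),(1,1),(2,1)]]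

def cycles2 : List (List (ZMod 3 × ZMod 3)) :=
  [[(0,0),(0,1),(0,2)], [(0,0),(1,0),(2,0)], [(0,1),(1,2),(2,0)], [(0,2),(1,0),(2,1)],
   [(0,1),(1,1),(2,1)], [(1,0),(1,1),(1,2)], [(0,0),(1,1),(2,2)],
   [(0,2),(1,2),(2,0),(2,1)], [(0,0),(0,1),(1,2),(2,2)], [(0,1),(0,2),(1,0),(2,0)],
   [(0,2),(1,2),(2,2)], [(2,0),(2,1),(2,2)], [(0,0),(1,0),(2,1),(2,2)],
   [(0,0),(1,1),(1,2),(2,0)], [(0,0),(1,1),(2,1),(0,2)], [(0,1),(1,1),(2,2),(2,0)],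
   [(0,1),(1,2),(1,0),(2,1)], [(0,2),(1,0),(1,1),(2,2)]]

set_option maxRecDepth 40000 in
lemma lb1 : ∀ f : ZMod 3 × ZMod 2 → Fin 2,
    ¬ IsAcyclicColoring (strongAdj (dicycleAdj 3) (dicycleAdj 2)) f := by
  intro f
  have key : ∃ l ∈ cycles1, IsDicycle (strongAdj (dicycleAdj 3) (dicycleAdj 2)) l ∧
      ∀ v ∈ l, f v = f l.headI := by revert f; decide
  obtain ⟨l, _, hcyc, hmono⟩ := key
  exact not_acyclicColoring_of_mono _ f l hcyc hmono

set_option maxRecDepth 40000 in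
lemma lb2 : ∀ f : ZMod 3 × ZMod 3 → Fin 2,
    ¬ IsAcyclicColoring (strongAdj (dicycleAdj 3) (dicycleAdj 3)) f := by
  intro f
  have key : ∃ l ∈ cycles2, IsDicycle (strongAdj (dicycleAdj 3) (dicycleAdj 3)) l ∧
      ∀ v ∈ l, f v = f l.headI := by revert f; decide
  obtain ⟨l, _, hcyc, hmono⟩ := key
  exact not_acyclicColoring_of_mono _ f l hcyc hmono

end Aux

set_option maxRecDepth 40000 in
theorem stmt11 :
    dichromaticNumber (strongAdj (dicycleAdj 3) (dicycleAdj 2)) = 3 ∧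
    dichromaticNumber (strongAdj (dicycleAdj 3) (dicycleAdj 3)) = 3 := by
  constructor
  · refine dichromatic_eq_three _ ⟨f1, isAcyclicColoring_of_order _ f1 g1 ?_⟩ lb1
    decide
  · refine dichromatic_eq_three _ ⟨f2, isAcyclicColoring_of_order _ f2 g2 ?_⟩ lb2
    decide
end

section
/- For all integers m ≥ 4 and n ≥ 3, the dichromatic number of the strong product of the dicycles on m and n vertices equals 2: χ_a(C⃗_m ⊠ C⃗_n) = 2. -/
/-! ### Auxiliary machinery -/

lemma chain_mono' {V : Type*} {Adj : V → V → Prop} {S : Set V} {φ : V → ℕ}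
    (h : ∀ u v, u ∈ S → v ∈ S → Adj u v → φ u < φ v) :
    ∀ (l : List V) (hne : l ≠ []), (∀ v ∈ l, v ∈ S) → l.Chain' Adj →
      φ (l.head hne) ≤ φ (l.getLast hne) := by
  intro l
  induction l with
  | nil => intro hne; exact absurd rfl hne
  | cons a t ih =>
    intro hne hmem hchain
    match t with
    | [] => simp
    | b :: t' =>
      rw [List.Chain', List.isChain_cons_cons] at hchain
      have h1 : φ a < φ b :=
        h a b (hmem a (by simp)) (hmem b (by simp)) hchain.1
      have h2 := ih (by simp) (fun v hv => hmem v (by simp [hv])) hchain.2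
      rw [List.getLast_cons (by simp)]
      simpa using le_trans (le_of_lt h1) (by simpa using h2)

lemma acyclic_of_potential {V : Type*} (Adj : V → V → Prop) (S : Set V) (φ : V → ℕ)
    (h : ∀ u v, u ∈ S → v ∈ S → Adj u v → φ u < φ v) : AcyclicSet Adj S := by
  rintro ⟨l, hmem, hlen, _, hchain, hlast⟩
  have hne : l ≠ [] := by intro e; rw [e] at hlen; simp at hlen
  have h1 := chain_mono' h l hne hmem hchain
  have h2 := h _ _ (hmem _ (List.getLast_mem hne)) (hmem _ (List.head_mem hne)) (hlast hne)
  omega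

lemma zval_succ {k : ℕ} (hk : 1 < k) (x : ZMod k) (h : x + 1 ≠ 0) :
    (x + 1).val = x.val + 1 := by
  haveI : NeZero k := ⟨by omega⟩
  haveI : Fact (1 < k) := ⟨hk⟩
  have h1 : (x + 1).val = (x.val + 1) % k := by
    rw [ZMod.val_add, ZMod.val_one]
  have h2 : x.val < k := ZMod.val_lt x
  rcases Nat.lt_or_ge (x.val + 1) k with h3 | h3
  · rw [h1, Nat.mod_eq_of_lt h3]
  · have h4 : x.val + 1 = k := by omega
    have h5 : (x + 1).val = 0 := by rw [h1, h4, Nat.mod_self]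
    exact absurd ((ZMod.val_eq_zero _).1 h5) h

def colFun (m n : ℕ) : ℕ → ZMod m × ZMod n := fun j => ((0 : ZMod m), (j : ZMod n))

lemma column_cycle (m n : ℕ) (hn : 2 ≤ n) :
    IsDicycle (strongAdj (dicycleAdj m) (dicycleAdj n))
      ((List.range n).map (colFun m n)) := by
  haveI : NeZero n := ⟨by omega⟩
  have hlen : ((List.range n).map (colFun m n)).length = n := by
    rw [List.length_map, List.length_range]
  refine ⟨by rw [hlen]; exact hn, ?_, ?_, ?_⟩
  · refine List.Nodup.map_on ?_ (List.nodup_range (n := n))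
    intro x hx y hy hxy
    rw [List.mem_range] at hx hy
    have h2 : (x : ZMod n) = (y : ZMod n) := congrArg Prod.snd hxy
    have := congrArg ZMod.val h2
    rwa [ZMod.val_cast_of_lt hx, ZMod.val_cast_of_lt hy] at this
  · rw [List.Chain', List.isChain_map]
    obtain ⟨n', rfl⟩ : ∃ n', n = n' + 1 := ⟨n - 1, by omega⟩
    rw [List.isChain_range_succ]
    intro j _
    exact Or.inl ⟨rfl, by show ((j+1:ℕ):ZMod (n'+1)) = (j:ZMod (n'+1)) + 1; push_cast; ring⟩
  · intro h
    have hlast : ((List.range n).map (colFun m n)).getLast h = colFun m n (n - 1) := by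
      rw [List.getLast_eq_getElem, List.getElem_map, List.getElem_range]
      rw [hlen]
    have hhead : ((List.range n).map (colFun m n)).head h = colFun m n 0 := by
      rw [List.head_eq_getElem_zero, List.getElem_map, List.getElem_range]
    rw [hlast, hhead]
    refine Or.inl ⟨rfl, ?_⟩
    show (((0:ℕ)) : ZMod n) = ((n - 1 : ℕ) : ZMod n) + 1
    have h1 : (((n - 1 : ℕ) : ZMod n) + 1) = ((n - 1 + 1 : ℕ) : ZMod n) := by push_cast; ring
    rw [h1, Nat.sub_add_cancel (by omega), ZMod.natCast_self, Nat.cast_zero]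

/-- Special row for each column. -/
def rr (m n : ℕ) (i : ZMod m) : ZMod n := if i.val = 1 ∨ i.val = 3 then 2 else 0

/-- The acyclic 2-coloring of the strong product of dicycles. -/
def ff (m n : ℕ) (p : ZMod m × ZMod n) : Fin 2 :=
  if (p.1.val ≤ 1 ↔ p.2 = rr m n p.1) then 0 else 1

/-- Potential function with column seam at `a`. -/
def pot (m n : ℕ) (a : ZMod m) (p : ZMod m × ZMod n) : ℕ :=
  (n + 1) * (p.1 - a).val + (p.2 - rr m n p.1).val

section
variable {m n : ℕ}

lemma val0m (hm : 4 ≤ m) : (0 : ZMod m).val = 0 := by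
  haveI : NeZero m := ⟨by omega⟩
  exact ZMod.val_zero

lemma val1m (hm : 4 ≤ m) : (1 : ZMod m).val = 1 := by
  rw [show (1 : ZMod m) = ((1 : ℕ) : ZMod m) by norm_cast]
  exact ZMod.val_cast_of_lt (by omega)

lemma val2m (hm : 4 ≤ m) : (2 : ZMod m).val = 2 := by
  rw [show (2 : ZMod m) = ((2 : ℕ) : ZMod m) by norm_cast]
  exact ZMod.val_cast_of_lt (by omega)

lemma val3m (hm : 4 ≤ m) : (3 : ZMod m).val = 3 := by
  rw [show (3 : ZMod m) = ((3 : ℕ) : ZMod m) by norm_cast]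
  exact ZMod.val_cast_of_lt (by omega)

lemma val2n (hn : 3 ≤ n) : (2 : ZMod n).val = 2 := by
  rw [show (2 : ZMod n) = ((2 : ℕ) : ZMod n) by norm_cast]
  exact ZMod.val_cast_of_lt (by omega)

lemma two_ne_zero_n (hn : 3 ≤ n) : (2 : ZMod n) ≠ 0 := by
  haveI : NeZero n := ⟨by omega⟩
  intro h
  have := val2n hn
  rw [h, ZMod.val_zero] at this
  omega

lemma two_ne_one_n (hn : 3 ≤ n) : (2 : ZMod n) ≠ 1 := by
  intro h
  have := val2n hn
  rw [h, show (1 : ZMod n) = ((1:ℕ) : ZMod n) by norm_cast,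
    ZMod.val_cast_of_lt (show 1 < n by omega)] at this
  omega

lemma one_ne_zero_n (hn : 3 ≤ n) : (1 : ZMod n) ≠ 0 := by
  haveI : NeZero n := ⟨by omega⟩
  intro h
  have h2 : (1 : ZMod n).val = 0 := by rw [h, ZMod.val_zero]
  rw [show (1 : ZMod n) = ((1:ℕ) : ZMod n) by norm_cast,
    ZMod.val_cast_of_lt (show 1 < n by omega)] at h2
  omega

lemma rr0 (hm : 4 ≤ m) : rr m n (0 : ZMod m) = 0 := by
  rw [rr, if_neg]; rw [val0m hm]; omega

lemma rr1 (hm : 4 ≤ m) : rr m n (1 : ZMod m) = 2 := by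
  rw [rr, if_pos]; rw [val1m hm]; omega

lemma rr2 (hm : 4 ≤ m) : rr m n (2 : ZMod m) = 0 := by
  rw [rr, if_neg]; rw [val2m hm]; omega

lemma rr3 (hm : 4 ≤ m) : rr m n (3 : ZMod m) = 2 := by
  rw [rr, if_pos]; rw [val3m hm]; omega

lemma ff_eq_zero {p : ZMod m × ZMod n} (h : ff m n p = 0) :
    (p.1.val ≤ 1 ↔ p.2 = rr m n p.1) := by
  by_contra hc
  rw [ff, if_neg hc] at h
  exact absurd h (by decide)

lemma ff_eq_one {p : ZMod m × ZMod n} (h : ff m n p = 1) :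
    ¬(p.1.val ≤ 1 ↔ p.2 = rr m n p.1) := by
  intro hc
  rw [ff, if_pos hc] at h
  exact absurd h (by decide)

/-- Core monotonicity given the two seam conditions. -/
lemma mono_aux (hm : 4 ≤ m) (hn : 3 ≤ n) (c : Fin 2) (a : ZMod m)
    (ha : ∀ u v : ZMod m × ZMod n, ff m n u = c → ff m n v = c →
      v.1 = u.1 + 1 → (v.2 = u.2 ∨ v.2 = u.2 + 1) → u.1 - a + 1 = 0 → False)
    (hb : ∀ u v : ZMod m × ZMod n, ff m n u = c → ff m n v = c →
      v.1 = u.1 → v.2 = u.2 + 1 → v.2 ≠ rr m n u.1) :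
    ∀ u v, ff m n u = c → ff m n v = c →
      strongAdj (dicycleAdj m) (dicycleAdj n) u v → pot m n a u < pot m n a v := by
  haveI : NeZero m := ⟨by omega⟩
  haveI : NeZero n := ⟨by omega⟩
  intro u v hu hv hadj
  have hstep : (v.1 = u.1 ∧ v.2 = u.2 + 1) ∨
      (v.1 = u.1 + 1 ∧ (v.2 = u.2 ∨ v.2 = u.2 + 1)) := by
    rcases hadj with ⟨h1, h2⟩ | ⟨h1, h2⟩ | ⟨h1, h2⟩
    · exact Or.inl ⟨h1.symm, h2⟩
    · exact Or.inr ⟨h1, Or.inl h2.symm⟩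
    · exact Or.inr ⟨h1, Or.inr h2⟩
  rcases hstep with ⟨h1, h2⟩ | ⟨h1, h2⟩
  · have hne : v.2 ≠ rr m n u.1 := hb u v hu hv h1 h2
    have hx : v.2 - rr m n u.1 = (u.2 - rr m n u.1) + 1 := by rw [h2]; ring
    have hval : (v.2 - rr m n u.1).val = (u.2 - rr m n u.1).val + 1 := by
      rw [hx]
      exact zval_succ (by omega) _ (by rw [← hx]; exact sub_ne_zero_of_ne hne)
    rw [pot, pot, h1, hval]
    omega
  · have hwrap : u.1 - a + 1 ≠ 0 := fun h => ha u v hu hv h1 h2 h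
    have hx : v.1 - a = (u.1 - a) + 1 := by rw [h1]; ring
    have hval : (v.1 - a).val = (u.1 - a).val + 1 := by
      rw [hx]; exact zval_succ (by omega) _ hwrap
    have hlt : (u.2 - rr m n u.1).val < n := ZMod.val_lt _
    have h3 : pot m n a v = (n + 1) * (u.1 - a).val + (n + 1) + (v.2 - rr m n v.1).val := by
      rw [pot, hval]; ring
    rw [pot, h3]
    omega

lemma seam_b0 (hm : 4 ≤ m) (hn : 3 ≤ n) :
    ∀ u v : ZMod m × ZMod n, ff m n u = 0 → ff m n v = 0 →
      v.1 = u.1 → v.2 = u.2 + 1 → v.2 ≠ rr m n u.1 := by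
  intro u v hu hv h1 h2 hc
  have hu' := ff_eq_zero hu
  have hv' := ff_eq_zero hv
  rw [h1] at hv'
  have hva : u.1.val ≤ 1 := hv'.2 (by rw [← h1] at hc ⊢; exact hc)
  have : u.2 = rr m n u.1 := hu'.1 hva
  rw [← this, h2] at hc
  exact one_ne_zero_n hn (by linear_combination hc)

lemma seam_b1 (hm : 4 ≤ m) (hn : 3 ≤ n) :
    ∀ u v : ZMod m × ZMod n, ff m n u = 1 → ff m n v = 1 →
      v.1 = u.1 → v.2 = u.2 + 1 → v.2 ≠ rr m n u.1 := by
  intro u v hu hv h1 h2 hc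
  have hu' := ff_eq_one hu
  have hv' := ff_eq_one hv
  rw [h1] at hv'
  have hva : ¬ u.1.val ≤ 1 := fun h => hv' (iff_of_true h (by rw [← h1] at hc ⊢; exact hc))
  have : u.2 = rr m n u.1 := by tauto
  rw [← this, h2] at hc
  exact one_ne_zero_n hn (by linear_combination hc)

lemma seam_a0 (hm : 4 ≤ m) (hn : 3 ≤ n) :
    ∀ u v : ZMod m × ZMod n, ff m n u = 0 → ff m n v = 0 →
      v.1 = u.1 + 1 → (v.2 = u.2 ∨ v.2 = u.2 + 1) → u.1 - 1 + 1 = 0 → False := by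
  intro u v hu hv h1 h2 h3
  have hu1 : u.1 = 0 := by linear_combination h3
  have hv1 : v.1 = 1 := by rw [h1, hu1]; ring
  have hu' := ff_eq_zero hu
  have hv' := ff_eq_zero hv
  rw [hu1, rr0 hm, val0m hm] at hu'
  rw [hv1, rr1 hm, val1m hm] at hv'
  have hu2 : u.2 = 0 := hu'.1 (by omega)
  have hv2 : v.2 = 2 := hv'.1 (by omega)
  rcases h2 with h2 | h2
  · rw [hv2, hu2] at h2; exact two_ne_zero_n hn h2
  · rw [hv2, hu2, zero_add] at h2; exact two_ne_one_n hn h2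

lemma seam_a1 (hm : 4 ≤ m) (hn : 3 ≤ n) :
    ∀ u v : ZMod m × ZMod n, ff m n u = 1 → ff m n v = 1 →
      v.1 = u.1 + 1 → (v.2 = u.2 ∨ v.2 = u.2 + 1) → u.1 - 3 + 1 = 0 → False := by
  intro u v hu hv h1 h2 h3
  have hu1 : u.1 = 2 := by linear_combination h3
  have hv1 : v.1 = 3 := by rw [h1, hu1]; ring
  have hu' := ff_eq_one hu
  have hv' := ff_eq_one hv
  rw [hu1, rr2 hm, val2m hm] at hu'
  rw [hv1, rr3 hm, val3m hm] at hv'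
  have hu2 : u.2 = 0 := by
    by_contra h
    exact hu' (iff_of_false (by omega) h)
  have hv2 : v.2 = 2 := by
    by_contra h
    exact hv' (iff_of_false (by omega) h)
  rcases h2 with h2 | h2
  · rw [hv2, hu2] at h2; exact two_ne_zero_n hn h2
  · rw [hv2, hu2, zero_add] at h2; exact two_ne_one_n hn h2

end

theorem stmt12 (m n : ℕ) (hm : 4 ≤ m) (hn : 3 ≤ n) :
    dichromaticNumber (strongAdj (dicycleAdj m) (dicycleAdj n)) = 2 := by
  haveI : NeZero m := ⟨by omega⟩
  haveI : NeZero n := ⟨by omega⟩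
  have hcyc := column_cycle m n (by omega)
  have h2 : 2 ∈ {k : ℕ | ∃ f : ZMod m × ZMod n → Fin k,
      IsAcyclicColoring (strongAdj (dicycleAdj m) (dicycleAdj n)) f} := by
    refine ⟨ff m n, fun c => ?_⟩
    fin_cases c
    · refine acyclic_of_potential _ _ (pot m n 1) ?_
      intro u v hu hv hadj
      exact mono_aux hm hn 0 1 (seam_a0 hm hn) (seam_b0 hm hn) u v hu hv hadj
    · refine acyclic_of_potential _ _ (pot m n 3) ?_
      intro u v hu hv hadj
      exact mono_aux hm hn 1 3 (seam_a1 hm hn) (seam_b1 hm hn) u v hu hv hadj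
  rw [dichromaticNumber]
  refine le_antisymm (Nat.sInf_le h2) (le_csInf ⟨2, h2⟩ ?_)
  rintro b ⟨f, hf⟩
  by_contra hb
  push_neg at hb
  interval_cases b
  · exact (f ((0 : ZMod m), (0 : ZMod n))).elim0
  · refine hf (f ((0 : ZMod m), (0 : ZMod n))) ⟨(List.range n).map (colFun m n), ?_, hcyc⟩
    intro v _
    exact Subsingleton.elim _ _
end

section
/- Let G and H be digraphs with V(H) nonempty, and let k = χ_a(H). Then the dichromatic number of the lexicographic product of G by H equals the dichromatic number of the lexicographic product of G by the complete digraph on k vertices: χ_a(G[H]) = χ_a(G[K↔_k]). -/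
namespace DichromAux

variable {α V W : Type*}

lemma head_map (f : α → V) {l : List α} (h : l ≠ []) :
    (l.map f).head (by simpa using h) = f (l.head h) := by
  cases l with
  | nil => simp at h
  | cons a t => simp

lemma getLast_map (f : α → V) {l : List α} (h : l ≠ []) :
    (l.map f).getLast (by simpa using h) = f (l.getLast h) := by
  have h2 : l.map f ≠ [] := by simpa using h
  have e1 := List.getLast?_eq_getLast_of_ne_nil h2
  rw [List.getLast?_map, List.getLast?_eq_getLast_of_ne_nil h] at e1
  simpa using e1.symm

lemma chain'_mono_mem {R R' : V → V → Prop} : ∀ {l : List V},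
    l.Chain' R → (∀ a ∈ l, ∀ b ∈ l, R a b → R' a b) → l.Chain' R'
  | [], _, _ => List.isChain_nil
  | [a], _, _ => List.isChain_singleton a
  | a :: b :: t, h, H => by
    simp only [List.Chain'] at h ⊢; rw [List.isChain_cons_cons] at h ⊢
    exact ⟨H a (by simp) b (by simp) h.1,
      chain'_mono_mem h.2 fun x hx y hy => H x (by simp [hx]) y (by simp [hy])⟩

lemma chain'_and_pairwise {R Q : V → V → Prop} : ∀ {l : List V},
    l.Chain' R → l.Pairwise Q → l.Chain' (fun a b => R a b ∧ Q a b)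
  | [], _, _ => List.isChain_nil
  | [a], _, _ => List.isChain_singleton a
  | a :: b :: t, h, hp => by
    simp only [List.Chain'] at h ⊢; rw [List.isChain_cons_cons] at h ⊢
    rw [List.pairwise_cons] at hp
    exact ⟨⟨h.1, hp.1 b (by simp)⟩, chain'_and_pairwise h.2 hp.2⟩

lemma two_le_length_of_two_mem {l : List V} {x y : V}
    (hx : x ∈ l) (hy : y ∈ l) (hxy : x ≠ y) : 2 ≤ l.length := by
  match l with
  | [] => simp at hx
  | [a] => simp_all
  | a :: b :: t => simp [List.length]

lemma getLast_ne_head_of_nodup {l : List V} (hnd : l.Nodup) (hlen : 2 ≤ l.length)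
    (h : l ≠ []) : l.getLast h ≠ l.head h := by
  match l with
  | a :: b :: t =>
    rw [List.getLast_cons (List.cons_ne_nil _ _), List.head_cons]
    intro hEq
    rw [List.nodup_cons] at hnd
    exact hnd.1 (hEq ▸ List.getLast_mem (List.cons_ne_nil _ _))

lemma not_nodup_decomp : ∀ {l : List V}, ¬ l.Nodup →
    ∃ (a b c : List V) (x : V), l = a ++ x :: (b ++ x :: c)
  | [], h => absurd List.nodup_nil h
  | y :: t, h => by
    by_cases hy : y ∈ t
    · obtain ⟨b, c, rfl⟩ := List.append_of_mem hy
      exact ⟨[], b, c, y, rfl⟩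
    · have ht : ¬ t.Nodup := fun hn => h (List.nodup_cons.mpr ⟨hy, hn⟩)
      obtain ⟨a, b, c, x, rfl⟩ := not_nodup_decomp ht
      exact ⟨y :: a, b, c, x, rfl⟩

/-- closing condition via `getLast?`/`head?`. -/
def Closing (R : V → V → Prop) (l : List V) : Prop :=
  ∀ x ∈ l.getLast?, ∀ y ∈ l.head?, R x y

lemma closing_of_ne_nil {R : V → V → Prop} {l : List V} (h : l ≠ [])
    (hc : Closing R l) : R (l.getLast h) (l.head h) :=
  hc _ (by rw [List.getLast?_eq_getLast_of_ne_nil h]; rfl)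
    _ (by rw [List.head?_eq_head h]; rfl)

lemma closing_mk {R : V → V → Prop} {l : List V} (h : l ≠ [])
    (hc : R (l.getLast h) (l.head h)) : Closing R l := by
  intro x hx y hy
  rw [List.getLast?_eq_getLast_of_ne_nil h, Option.mem_def, Option.some.injEq] at hx
  rw [List.head?_eq_head h, Option.mem_def, Option.some.injEq] at hy
  rw [← hx, ← hy]; exact hc

/-- Extraction of a dicycle from a closed walk (under the reflexive closure)
containing two distinct vertices. -/
lemma exists_dicycle_of_closed_walk {Adj : V → V → Prop} (hirr : Irreflexive Adj) :
    ∀ n (l : List V), l.length ≤ n → l ≠ [] →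
    l.Chain' (fun a b => a = b ∨ Adj a b) →
    Closing (fun a b => a = b ∨ Adj a b) l →
    ∀ x ∈ l, ∀ y ∈ l, x ≠ y →
    ∃ c : List V, (∀ v ∈ c, v ∈ l) ∧ IsDicycle Adj c := by
  intro n
  induction n with
  | zero => intro l hl hne; simp [List.length_eq_zero_iff.mp (Nat.le_zero.mp hl)] at hne
  | succ n ih =>
    intro l hl hne hch hcl x hx y hy hxy
    by_cases hnd : l.Nodup
    · refine ⟨l, fun v hv => hv, two_le_length_of_two_mem hx hy hxy, hnd, ?_, ?_⟩
      · exact (chain'_and_pairwise hch hnd).imp fun a b hab =>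
          hab.1.resolve_left hab.2
      · intro h
        exact (closing_of_ne_nil h hcl).resolve_left
          (getLast_ne_head_of_nodup hnd (two_le_length_of_two_mem hx hy hxy) h)
    · obtain ⟨a, b, c, z, rfl⟩ := not_nodup_decomp hnd
      set R := fun a b : V => a = b ∨ Adj a b with hR
      have hsuf : (z :: (b ++ z :: c)) <:+ (a ++ z :: (b ++ z :: c)) := ⟨a, rfl⟩
      have hch2 : (z :: (b ++ z :: c)).Chain' R := hch.suffix hsuf
      have hsplit : ((z :: b) ++ (z :: c)).Chain' R := by
        simpa using hch2
      simp only [List.Chain'] at hsplit; rw [List.isChain_append] at hsplit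
      obtain ⟨C1, C2, Hlink⟩ := hsplit
      -- choose y0 ≠ z in l
      obtain ⟨y0, hy0l, hy0z⟩ : ∃ y0 ∈ a ++ z :: (b ++ z :: c), y0 ≠ z := by
        by_cases hxz : x = z
        · exact ⟨y, hy, fun h => hxy (hxz.trans h.symm)⟩
        · exact ⟨x, hx, hxz⟩
      by_cases hy0 : y0 ∈ z :: b
      · -- inner walk z :: b
        have hlen : (z :: b).length ≤ n := by
          simp only [List.length_append, List.length_cons] at hl ⊢
          omega
        have hclos : Closing R (z :: b) := by
          intro pp hp qq hq
          have hq' : z = qq := by simpa using hq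
          exact hq' ▸ Hlink pp hp z (by simp)
        obtain ⟨cyc, hsub, hcyc⟩ := ih (z :: b) hlen (List.cons_ne_nil _ _)
          (C1) hclos z (by simp) y0 hy0 (Ne.symm hy0z)
        refine ⟨cyc, fun v hv => ?_, hcyc⟩
        have := hsub v hv
        simp only [List.mem_cons, List.mem_append] at this ⊢
        tauto
      · -- outer walk a ++ z :: c
        have hlen : (a ++ z :: c).length ≤ n := by
          simp only [List.length_append, List.length_cons] at hl ⊢
          omega
        have hne' : a ++ z :: c ≠ [] := by simp
        have hchain' : (a ++ z :: c).Chain' R := by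
          simp only [List.Chain']; rw [List.isChain_append]
          refine ⟨hch.prefix ⟨z :: (b ++ z :: c), rfl⟩, C2, ?_⟩
          have := (List.isChain_append.mp hch).2.2
          intro p hp q hq
          exact this p hp q (by simpa using hq)
        have hheads : (a ++ z :: c).head? = (a ++ z :: (b ++ z :: c)).head? := by
          cases a <;> simp
        have h0 : (z :: c).getLast? = some ((z :: c).getLast (by simp)) :=
          List.getLast?_eq_getLast_of_ne_nil (by simp)
        have h1 : (z :: (b ++ z :: c)).getLast? = (z :: c).getLast? := by
          rw [show z :: (b ++ z :: c) = (z :: b) ++ (z :: c) by simp,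
            List.getLast?_append, h0]
          simp
        have hlasts : (a ++ z :: c).getLast? = (a ++ z :: (b ++ z :: c)).getLast? := by
          rw [List.getLast?_append, List.getLast?_append, h1]
        have hclos' : Closing R (a ++ z :: c) := by
          intro p hp q hq
          exact hcl p (hlasts ▸ hp) q (hheads ▸ hq)
        have hy0' : y0 ∈ a ++ z :: c := by
          simp only [List.mem_append, List.mem_cons] at hy0l hy0 ⊢
          tauto
        obtain ⟨cyc, hsub, hcyc⟩ := ih (a ++ z :: c) hlen hne' hchain' hclos'
          z (by simp) y0 hy0' (Ne.symm hy0z)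
        refine ⟨cyc, fun v hv => ?_, hcyc⟩
        have := hsub v hv
        simp only [List.mem_cons, List.mem_append] at this ⊢
        tauto



/-- An injective coloring is acyclic. -/
lemma isAcyclicColoring_of_injective {C : Type*} {Adj : V → V → Prop} {f : V → C}
    (hf : Function.Injective f) : IsAcyclicColoring Adj f := by
  rintro c ⟨l, hl, h2, hnd, -, -⟩
  match l, h2, hnd with
  | a :: b :: t, _, hnd =>
    have ha : f a = c := hl a (by simp)
    have hb : f b = c := hl b (by simp)
    have : a = b := hf (ha.trans hb.symm)
    rw [List.nodup_cons] at hnd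
    exact hnd.1 (this ▸ List.mem_cons_self)

lemma colorings_nonempty [Fintype V] (Adj : V → V → Prop) :
    {k : ℕ | ∃ f : V → Fin k, IsAcyclicColoring Adj f}.Nonempty :=
  ⟨Fintype.card V, (Fintype.equivFin V : V → Fin (Fintype.card V)),
    isAcyclicColoring_of_injective (Fintype.equivFin V).injective⟩

lemma exists_optimal_coloring [Fintype V] (Adj : V → V → Prop) :
    ∃ f : V → Fin (dichromaticNumber Adj), IsAcyclicColoring Adj f :=
  Nat.sInf_mem (colorings_nonempty Adj)

lemma dichromaticNumber_le {m : ℕ} {Adj : V → V → Prop}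
    (h : ∃ f : V → Fin m, IsAcyclicColoring Adj f) : dichromaticNumber Adj ≤ m :=
  Nat.sInf_le h

/-- The dichromatic number is at most the number of colors actually used by an
acyclic coloring. -/
lemma dichromaticNumber_le_image_card [Fintype V] [DecidableEq V] {m : ℕ}
    {Adj : V → V → Prop} {h : V → Fin m} (hh : IsAcyclicColoring Adj h) :
    dichromaticNumber Adj ≤ (Finset.univ.image h).card := by
  classical
  set S := Finset.univ.image h with hS
  have hmem : ∀ x, h x ∈ S := fun x => Finset.mem_image_of_mem _ (Finset.mem_univ x)
  have e : {c // c ∈ S} ≃ Fin S.card :=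
    Fintype.equivFinOfCardEq (by simp [Fintype.card_coe])
  apply dichromaticNumber_le
  refine ⟨fun x => e ⟨h x, hmem x⟩, ?_⟩
  rintro d ⟨l, hl, hcyc⟩
  have hlen := hcyc.1
  have hne : l ≠ [] := by intro h0; rw [h0] at hlen; simp at hlen
  set x0 := l.head hne with hx0
  refine hh (h x0) ⟨l, fun v hv => ?_, hcyc⟩
  have h1 : e ⟨h v, hmem v⟩ = d := hl v hv
  have h2 : e ⟨h x0, hmem x0⟩ = d := hl x0 (List.head_mem hne)
  have : (⟨h v, hmem v⟩ : {c // c ∈ S}) = ⟨h x0, hmem x0⟩ := e.injective (h1.trans h2.symm)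
  simpa using Subtype.mk.injEq .. ▸ this

lemma dir_ge {V W : Type*} [Fintype V] [Fintype W] [Nonempty W]
    (GA : V → V → Prop) (HA : W → W → Prop) :
    dichromaticNumber (lexAdj GA (completeAdj (dichromaticNumber HA))) ≤
      dichromaticNumber (lexAdj GA HA) := by
  classical
  set k := dichromaticNumber HA with hk
  obtain ⟨f, hf⟩ := exists_optimal_coloring (lexAdj GA HA)
  -- each fiber coloring is an acyclic coloring of H
  have fiber : ∀ u : V, IsAcyclicColoring HA (fun x => f (u, x)) := by
    rintro u c ⟨l, hl, hlen, hnd, hch, hclos⟩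
    have hne' : l.map (fun x => (u, x)) ≠ [] := by
      intro h0; rw [List.map_eq_nil_iff] at h0; rw [h0] at hlen; simp at hlen
    refine hf c ⟨l.map (fun x => (u, x)), ?_, ?_, ?_, ?_, ?_⟩
    · intro v hv; obtain ⟨x, hx, rfl⟩ := List.mem_map.mp hv
      simpa using hl x hx
    · simpa using hlen
    · exact hnd.map (fun x y h => congrArg Prod.snd h)
    · simp only [List.Chain']; rw [List.isChain_map]; exact hch.imp fun a b h => Or.inr ⟨rfl, h⟩
    · intro h
      have hne : l ≠ [] := by simpa using h
      rw [getLast_map _ hne, head_map _ hne]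
      exact Or.inr ⟨rfl, hclos hne⟩
  -- choose, for each u, an embedding of Fin k into the colors used on the fiber of u
  have key : ∀ u : V, ∃ e : Fin k ↪ Fin (dichromaticNumber (lexAdj GA HA)),
      ∀ j : Fin k, ∃ x : W, f (u, x) = e j := by
    intro u
    have h1 : k ≤ (Finset.univ.image (fun x => f (u, x))).card :=
      dichromaticNumber_le_image_card (fiber u)
    obtain ⟨e, he⟩ := Function.Embedding.exists_of_card_le_finset
      (by simpa using h1 : Fintype.card (Fin k) ≤
        (Finset.univ.image (fun x => f (u, x))).card)
    refine ⟨e, fun j => ?_⟩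
    have : e j ∈ Finset.univ.image (fun x => f (u, x)) := he ⟨j, rfl⟩
    obtain ⟨x, -, hx⟩ := Finset.mem_image.mp this
    exact ⟨x, hx⟩
  choose E hE using key
  choose pick hpick using fun u => hE u
  apply dichromaticNumber_le
  refine ⟨fun p => E p.1 p.2, ?_⟩
  rintro c ⟨l, hl, hlen, hnd, hch, hclos⟩
  have hcol : ∀ p ∈ l, E p.1 p.2 = c := fun p hp => hl p hp
  have hinj : ∀ p ∈ l, ∀ q ∈ l, p.1 = q.1 → p = q := by
    intro p hp q hq h1
    have h2 : E p.1 p.2 = E p.1 q.2 := by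
      rw [hcol p hp, h1, hcol q hq]
    exact Prod.ext h1 ((E p.1).injective h2)
  have hGA : ∀ p ∈ l, ∀ q ∈ l,
      lexAdj GA (completeAdj k) p q → GA p.1 q.1 := by
    intro p hp q hq h
    rcases h with h | ⟨h1, h2⟩
    · exact h
    · exact absurd (congrArg Prod.snd (hinj p hp q hq h1)) h2
  set φ : V × Fin k → V × W := fun p => (p.1, pick p.1 p.2) with hφ
  have hφcol : ∀ p : V × Fin k, f (φ p) = E p.1 p.2 := fun p => hpick p.1 p.2
  have hne : l ≠ [] := by intro h0; rw [h0] at hlen; simp at hlen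
  refine hf c ⟨l.map φ, ?_, ?_, ?_, ?_, ?_⟩
  · intro v hv; obtain ⟨p, hp, rfl⟩ := List.mem_map.mp hv
    simp only [Set.mem_preimage, Set.mem_singleton_iff]
    rw [hφcol p]; exact hcol p hp
  · simpa using hlen
  · refine hnd.map_on ?_
    intro p hp q hq hpq
    have h1 : (φ p).1 = (φ q).1 := congrArg Prod.fst hpq
    exact hinj p hp q hq h1
  · simp only [List.Chain']; rw [List.isChain_map]
    exact chain'_mono_mem hch fun p hp q hq h => Or.inl (hGA p hp q hq h)
  · intro h
    rw [getLast_map _ hne, head_map _ hne]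
    exact Or.inl (hGA _ (List.getLast_mem hne) _ (List.head_mem hne) (hclos hne))

lemma dir_le {V W : Type*} [Fintype V] [Fintype W] [Nonempty W]
    (GA : V → V → Prop) (HA : W → W → Prop) (hG : Irreflexive GA) :
    dichromaticNumber (lexAdj GA HA) ≤
      dichromaticNumber (lexAdj GA (completeAdj (dichromaticNumber HA))) := by
  classical
  set k := dichromaticNumber HA with hk
  obtain ⟨g, hg⟩ := exists_optimal_coloring HA
  obtain ⟨F, hF⟩ := exists_optimal_coloring (lexAdj GA (completeAdj k))
  apply dichromaticNumber_le
  refine ⟨fun p => F (p.1, g p.2), ?_⟩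
  rintro c ⟨l, hl, hlen, hnd, hch, hclos⟩
  set ψ : V × W → V × Fin k := fun p => (p.1, g p.2) with hψ
  have hne : l ≠ [] := by intro h0; rw [h0] at hlen; simp at hlen
  set R : V × Fin k → V × Fin k → Prop :=
    fun s t => s = t ∨ lexAdj GA (completeAdj k) s t with hRdef
  have himp : ∀ p q : V × W, lexAdj GA HA p q → R (ψ p) (ψ q) := by
    intro p q h
    rcases h with h | ⟨h1, h2⟩
    · exact Or.inr (Or.inl h)
    · by_cases hgp : g p.2 = g q.2
      · exact Or.inl (Prod.ext h1 hgp)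
      · exact Or.inr (Or.inr ⟨h1, hgp⟩)
  by_cases hconst : ∀ p ∈ l, ψ p = ψ (l.head hne)
  · -- the image is a single vertex: the cycle lives in one fiber and one g-class
    have hfst : ∀ p ∈ l, p.1 = (l.head hne).1 := by
      intro p hp
      have h1 : (ψ p).1 = (ψ (l.head hne)).1 := congrArg Prod.fst (hconst p hp)
      exact h1
    refine hg (g (l.head hne).2) ⟨l.map Prod.snd, ?_, ?_, ?_, ?_, ?_⟩
    · intro v hv; obtain ⟨p, hp, rfl⟩ := List.mem_map.mp hv
      have h1 : (ψ p).2 = (ψ (l.head hne)).2 := congrArg Prod.snd (hconst p hp)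
      simpa using h1
    · simpa using hlen
    · refine hnd.map_on ?_
      intro p hp q hq hpq
      exact Prod.ext ((hfst p hp).trans (hfst q hq).symm) hpq
    · simp only [List.Chain']; rw [List.isChain_map]
      refine chain'_mono_mem hch ?_
      intro p hp q hq h
      rcases h with h | ⟨-, h2⟩
      · exact absurd ((hfst p hp) ▸ (hfst q hq) ▸ h) (hG _)
      · exact h2
    · intro h
      rw [getLast_map _ hne, head_map _ hne]
      have := hclos hne
      rcases this with h' | ⟨-, h2⟩
      · exact absurd ((hfst _ (List.getLast_mem hne)) ▸
          (hfst _ (List.head_mem hne)) ▸ h') (hG _)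
      · exact h2
  · -- two distinct vertices in the image: extract a dicycle in G[K_k]
    push_neg at hconst
    obtain ⟨p0, hp0, hp0ne⟩ := hconst
    have hirr : Irreflexive (lexAdj GA (completeAdj k)) := by
      rintro ⟨u, j⟩ (h | ⟨-, h⟩)
      · exact hG u h
      · exact h rfl
    have hne' : l.map ψ ≠ [] := by simpa using hne
    have hch' : (l.map ψ).Chain' R := by
      simp only [List.Chain']; rw [List.isChain_map]
      exact hch.imp himp
    have hcl' : Closing R (l.map ψ) := by
      refine closing_mk hne' ?_
      rw [getLast_map _ hne, head_map _ hne]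
      exact himp _ _ (hclos hne)
    obtain ⟨cyc, hsub, hcyc⟩ := exists_dicycle_of_closed_walk hirr (l.map ψ).length
      (l.map ψ) le_rfl hne' hch' hcl' (ψ p0) (List.mem_map_of_mem (f := ψ) hp0)
      (ψ (l.head hne)) (List.mem_map_of_mem (f := ψ) (List.head_mem hne)) hp0ne
    refine hF c ⟨cyc, fun v hv => ?_, hcyc⟩
    obtain ⟨p, hp, rfl⟩ := List.mem_map.mp (hsub v hv)
    simp only [Set.mem_preimage, Set.mem_singleton_iff]
    have h1 := hl p hp
    simpa using h1

end DichromAux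

theorem stmt13 {V W : Type*} [Fintype V] [Fintype W] [Nonempty W]
    (GA : V → V → Prop) (HA : W → W → Prop)
    (hG : Irreflexive GA) (hH : Irreflexive HA) :
    dichromaticNumber (lexAdj GA HA) =
      dichromaticNumber (lexAdj GA (completeAdj (dichromaticNumber HA))) :=
  le_antisymm (DichromAux.dir_le GA HA hG) (DichromAux.dir_ge GA HA)
end

section
/- Let n ≥ 2 be an integer and let H be any digraph. Then the dichromatic number of the lexicographic product of the dicycle C⃗_n by H equals χ_a(H) + ⌈χ_a(H) / (n−1)⌉ (where ⌈·⌉ denotes the ceiling of the rational division). -/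
-- L1
lemma aux_acyclic_of_injective {V C : Type*} {Adj : V → V → Prop} {f : V → C}
    (hf : Function.Injective f) : IsAcyclicColoring Adj f := by
  rintro c ⟨l, hm, hlen, hnd, -⟩
  match l, hlen, hnd, hm with
  | a :: b :: t, _, hnd, hm =>
    have hab : a ≠ b := by simp [List.nodup_cons] at hnd; tauto
    have ha : f a = c := hm a (by simp)
    have hb : f b = c := hm b (by simp)
    exact hab (hf (ha.trans hb.symm))

-- L2
lemma aux_colorSet_nonempty {V : Type*} [Fintype V] (Adj : V → V → Prop) :
    {k : ℕ | ∃ f : V → Fin k, IsAcyclicColoring Adj f}.Nonempty :=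
  ⟨Fintype.card V, Fintype.equivFin V, aux_acyclic_of_injective (Fintype.equivFin V).injective⟩

-- L3
lemma aux_dichromatic_le_image_card {V C : Type*} [Fintype V] [DecidableEq C]
    {Adj : V → V → Prop} (f : V → C) (hf : IsAcyclicColoring Adj f) :
    dichromaticNumber Adj ≤ (Finset.univ.image f).card := by
  classical
  set s := Finset.univ.image f with hs
  have hmem : ∀ x, f x ∈ s := fun x => Finset.mem_image_of_mem f (Finset.mem_univ x)
  set e := s.equivFin with he
  refine Nat.sInf_le ⟨fun x => e ⟨f x, hmem x⟩, ?_⟩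
  intro d
  have hset : (fun x => e ⟨f x, hmem x⟩) ⁻¹' {d} = f ⁻¹' {((e.symm d : s) : C)} := by
    ext x
    simp only [Set.mem_preimage, Set.mem_singleton_iff]
    constructor
    · intro h; rw [← h]; simp
    · intro h
      have : (⟨f x, hmem x⟩ : s) = e.symm d := Subtype.ext h
      rw [this]; simp
  rw [hset]
  exact hf _

-- L4: slices of an acyclic coloring of the lex product are acyclic colorings of H
lemma aux_slice_acyclic {W : Type*} {n : ℕ} {HA : W → W → Prop} {m : ℕ}
    {F : ZMod n × W → Fin m} (hF : IsAcyclicColoring (lexAdj (dicycleAdj n) HA) F)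
    (i : ZMod n) : IsAcyclicColoring HA (fun x => F (i, x)) := by
  rintro c ⟨l, hm, hlen, hnd, hchain, hwrap⟩
  refine hF c ⟨l.map (fun x => (i, x)), ?_, ?_, ?_, ?_, ?_⟩
  · intro v hv
    simp only [List.mem_map] at hv
    obtain ⟨x, hx, rfl⟩ := hv
    exact hm x hx
  · simpa using hlen
  · exact hnd.map (fun a b hab => by simpa using hab)
  · unfold List.Chain'
    rw [List.isChain_map]
    exact hchain.imp (fun a b h => Or.inr ⟨rfl, h⟩)
  · intro h
    have hne : l ≠ [] := by simp at h; intro h'; simp [h'] at h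
    have h1 : (l.map (fun x => (i, x))).getLast h = (i, l.getLast hne) := by
      rw [List.getLast_eq_getElem, List.getLast_eq_getElem]
      simp
    have h2 : (l.map (fun x => (i, x))).head h = (i, l.head hne) := by
      rw [List.head_eq_getElem, List.head_eq_getElem]
      simp
    rw [h1, h2]
    exact Or.inr ⟨rfl, hwrap hne⟩

-- L5: a set meeting every fiber is not acyclic
lemma aux_allFibers {W : Type*} {n : ℕ} (hn : 2 ≤ n) {HA : W → W → Prop}
    {S : Set (ZMod n × W)} (h : ∀ i : ZMod n, ∃ x, (i, x) ∈ S) :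
    ¬ AcyclicSet (lexAdj (dicycleAdj n) HA) S := by
  intro hS
  choose g hg using h
  set f : ℕ → ZMod n × W := fun j => ((j : ZMod n), g ((j : ℕ) : ZMod n)) with hf
  set l : List (ZMod n × W) := (List.range n).map f with hl
  have hlen : l.length = n := by simp [hl]
  have hne : l ≠ [] := by
    intro h'; rw [h'] at hlen; simp at hlen; omega
  refine hS ⟨l, ?_, ?_, ?_, ?_, ?_⟩
  · intro v hv
    simp only [hl, List.mem_map] at hv
    obtain ⟨j, hj, rfl⟩ := hv
    exact hg _
  · omega
  · refine List.Nodup.map_on ?_ (List.nodup_range)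
    intro a ha b hb hab
    simp only [List.mem_range] at ha hb
    have h1 : ((a : ZMod n)) = (b : ZMod n) := congrArg Prod.fst hab
    have h2 := congrArg ZMod.val h1
    rwa [ZMod.val_cast_of_lt ha, ZMod.val_cast_of_lt hb] at h2
  · unfold List.Chain'
    rw [hl, List.isChain_map]
    rw [show List.range n = List.range ((n-1).succ) from by congr 1; omega]
    rw [List.isChain_range_succ]
    intro m hm
    refine Or.inl ?_
    show ((m + 1 : ℕ) : ZMod n) = (m : ZMod n) + 1
    push_cast
    ring
  · intro _
    rw [List.getLast_eq_getElem, List.head_eq_getElem]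
    simp only [hl, List.getElem_map, List.getElem_range, List.length_map, List.length_range]
    refine Or.inl ?_
    show ((0 : ℕ) : ZMod n) = ((n - 1 : ℕ) : ZMod n) + 1
    have hcast : ((n - 1 : ℕ) : ZMod n) = (n : ZMod n) - 1 := by
      push_cast [Nat.cast_sub (by omega : 1 ≤ n)]
      ring
    rw [hcast]
    simp [ZMod.natCast_self]

-- L6: a dicycle in the lex product avoiding fiber r lies in a single fiber
lemma aux_single_fiber {W : Type*} {n : ℕ} (hn : 2 ≤ n) {HA : W → W → Prop}
    {l : List (ZMod n × W)} (hd : IsDicycle (lexAdj (dicycleAdj n) HA) l)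
    (r : ZMod n) (hr : ∀ v ∈ l, v.1 ≠ r) :
    ∀ v ∈ l, ∀ w ∈ l, v.1 = w.1 := by
  haveI : NeZero n := ⟨by omega⟩
  haveI : Fact (1 < n) := ⟨by omega⟩
  obtain ⟨hlen, hnd, hchain, hwrap⟩ := hd
  set φ : ZMod n × W → ℕ := fun p => (p.1 - r).val with hφ
  have key : ∀ p q : ZMod n × W, lexAdj (dicycleAdj n) HA p q → p.1 ≠ r → q.1 ≠ r →
      (q.1 = p.1 ∧ φ q = φ p) ∨ φ q = φ p + 1 := by
    rintro p q (harc | ⟨heq, -⟩) hp hq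
    · right
      have h1 : q.1 - r = (p.1 - r) + 1 := by rw [harc]; ring
      have h2 : (p.1 - r).val < n := ZMod.val_lt _
      have h3 : (p.1 - r).val ≠ n - 1 := by
        intro hc
        apply hq
        have hv : p.1 - r = ((n - 1 : ℕ) : ZMod n) := by
          rw [← hc, ZMod.natCast_rightInverse _]
        have hm1 : ((n - 1 : ℕ) : ZMod n) = -1 := by
          have h5 : ((n - 1 : ℕ) : ZMod n) = (n : ZMod n) - 1 := by
            push_cast [Nat.cast_sub (by omega : 1 ≤ n)]; ring
          rw [h5, ZMod.natCast_self]; ring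
        have h6 : q.1 - r = 0 := by rw [h1, hv, hm1]; ring
        exact sub_eq_zero.mp h6
      have h4 : (p.1 - r).val + (1 : ZMod n).val < n := by
        rw [ZMod.val_one]; omega
      show (q.1 - r).val = (p.1 - r).val + 1
      rw [h1, ZMod.val_add_of_lt h4, ZMod.val_one]
    · left; exact ⟨heq.symm, by rw [hφ]; simp [heq]⟩
  set N := l.length with hN
  have hmem : ∀ j (h : j < N), l[j] ∈ l := fun j h => List.getElem_mem h
  have harc : ∀ j, (h : j + 1 < N) → lexAdj (dicycleAdj n) HA l[j] l[j+1] := by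
    intro j h
    have := List.isChain_iff_getElem.mp hchain j (by omega)
    simpa using this
  have hstep : ∀ j, (h : j + 1 < N) →
      (l[j+1].1 = l[j].1 ∧ φ l[j+1] = φ l[j]) ∨ φ l[j+1] = φ l[j] + 1 :=
    fun j h => key _ _ (harc j h) (hr _ (hmem j (by omega))) (hr _ (hmem (j+1) h))
  have hmono : ∀ j, (h : j < N) → ∀ i, (hi : i ≤ j) → φ l[i] ≤ φ l[j] := by
    intro j
    induction j with
    | zero =>
      intro h i hi
      obtain rfl : i = 0 := by omega
      exact le_refl _
    | succ m ih =>
      intro h i hi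
      rcases Nat.eq_or_lt_of_le hi with rfl | hlt
      · exact le_refl _
      · have h1 : φ l[i] ≤ φ l[m] := ih (by omega) i (by omega)
        rcases hstep m h with ⟨-, he⟩ | he <;> omega
  have hne : l ≠ [] := by intro h; rw [h] at hN; simp at hN; omega
  have hw := hwrap hne
  rw [List.getLast_eq_getElem, List.head_eq_getElem] at hw
  simp only [← hN] at hw
  have hwkey := key _ _ hw (hr _ (hmem (N-1) (by omega))) (hr _ (hmem 0 (by omega)))
  have hlast : φ l[0] = φ l[N-1] := by
    have := hmono (N-1) (by omega) 0 (by omega)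
    rcases hwkey with ⟨-, he⟩ | he <;> omega
  have hfst : ∀ j, (h : j < N) → l[j].1 = l[0].1 := by
    intro j
    induction j with
    | zero => intro h; rfl
    | succ m ih =>
      intro h
      have a1 : φ l[0] ≤ φ l[m] := hmono m (by omega) 0 (by omega)
      have a2 : φ l[m+1] ≤ φ l[N-1] := hmono (N-1) (by omega) (m+1) (by omega)
      rcases hstep m h with ⟨hfe, -⟩ | he
      · rw [hfe]; exact ih (by omega)
      · omega
  intro v hv w hw'
  obtain ⟨i, hi, rfl⟩ := List.mem_iff_getElem.mp hv
  obtain ⟨j, hj, rfl⟩ := List.mem_iff_getElem.mp hw'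
  rw [hfst i hi, hfst j hj]

-- L7: counting lower bound
lemma aux_lower {W : Type*} [Fintype W] {n : ℕ} (hn : 2 ≤ n) {HA : W → W → Prop} {m : ℕ}
    (F : ZMod n × W → Fin m) (hF : IsAcyclicColoring (lexAdj (dicycleAdj n) HA) F) :
    n * dichromaticNumber HA ≤ m * (n - 1) := by
  classical
  haveI : NeZero n := ⟨by omega⟩
  set k := dichromaticNumber HA with hk
  set T : Finset (ZMod n × Fin m) :=
    Finset.univ.filter (fun p => ∃ x, F (p.1, x) = p.2) with hT
  have count1 : ∀ i : ZMod n, k ≤ (T.filter (fun p => p.1 = i)).card := by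
    intro i
    have hs := aux_dichromatic_le_image_card (fun x => F (i, x)) (aux_slice_acyclic hF i)
    refine le_trans hs (Finset.card_le_card_of_injOn (fun c => (i, c)) ?_ ?_)
    · intro c hc
      simp only [Finset.mem_coe, Finset.mem_image] at hc
      obtain ⟨x, -, rfl⟩ := hc
      exact Finset.mem_filter.mpr ⟨Finset.mem_filter.mpr ⟨Finset.mem_univ _, ⟨x, rfl⟩⟩, rfl⟩
    · intro a _ b _ hab
      simpa using hab
  have count2 : ∀ c : Fin m, (T.filter (fun p => p.2 = c)).card ≤ n - 1 := by
    intro c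
    by_contra hcon
    push_neg at hcon
    have hinj : Set.InjOn (Prod.fst : ZMod n × Fin m → ZMod n)
        ((T.filter (fun p => p.2 = c) : Finset (ZMod n × Fin m)) : Set (ZMod n × Fin m)) := by
      intro p hp q hq hpq
      simp only [Finset.coe_filter, Set.mem_setOf_eq] at hp hq
      exact Prod.ext hpq (hp.2.trans hq.2.symm)
    have himcard : (Finset.image Prod.fst (T.filter (fun p => p.2 = c))).card =
        (T.filter (fun p => p.2 = c)).card := Finset.card_image_of_injOn hinj
    have huniv : Finset.image Prod.fst (T.filter (fun p => p.2 = c)) = Finset.univ := by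
      apply Finset.eq_univ_of_card
      rw [himcard, ZMod.card]
      have hle : (Finset.image Prod.fst (T.filter (fun p => p.2 = c))).card ≤ n := by
        exact le_trans (Finset.card_le_univ _) (le_of_eq (ZMod.card n))
      rw [himcard] at hle
      omega
    have hall : ∀ i : ZMod n, ∃ x, (i, x) ∈ F ⁻¹' {c} := by
      intro i
      have : i ∈ Finset.image Prod.fst (T.filter (fun p => p.2 = c)) := by
        rw [huniv]; exact Finset.mem_univ i
      simp only [Finset.mem_image, Finset.mem_filter, hT] at this
      obtain ⟨p, ⟨⟨-, hx⟩, hc2⟩, rfl⟩ := this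
      obtain ⟨x, hx⟩ := hx
      exact ⟨x, by simp [Set.mem_preimage, hx, hc2]⟩
    exact aux_allFibers hn hall (hF c)
  have h1 : T.card = ∑ i : ZMod n, (T.filter (fun p => p.1 = i)).card :=
    Finset.card_eq_sum_card_fiberwise (fun p _ => Finset.mem_univ p.1)
  have h2 : T.card = ∑ c : Fin m, (T.filter (fun p => p.2 = c)).card :=
    Finset.card_eq_sum_card_fiberwise (fun p _ => Finset.mem_univ p.2)
  have hlow : n * k ≤ T.card := by
    rw [h1]
    calc n * k = ∑ _i : ZMod n, k := by
          rw [Finset.sum_const, Finset.card_univ, ZMod.card, smul_eq_mul]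
      _ ≤ _ := Finset.sum_le_sum (fun i _ => count1 i)
  have hhigh : T.card ≤ m * (n - 1) := by
    rw [h2]
    calc ∑ c : Fin m, (T.filter (fun p => p.2 = c)).card
        ≤ ∑ _c : Fin m, (n - 1) := Finset.sum_le_sum (fun c _ => count2 c)
      _ = m * (n - 1) := by rw [Finset.sum_const, Finset.card_univ, Fintype.card_fin, smul_eq_mul]
  omega

-- L8: upper bound construction
lemma aux_upper {W : Type*} {n k m : ℕ} (hn : 2 ≤ n) {HA : W → W → Prop}
    (f : W → Fin k) (hf : IsAcyclicColoring HA f) (hnm : n * k ≤ m * (n - 1)) :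
    ∃ F : ZMod n × W → Fin m, IsAcyclicColoring (lexAdj (dicycleAdj n) HA) F := by
  haveI : NeZero n := ⟨by omega⟩
  haveI : Fact (1 < n) := ⟨by omega⟩
  have hbound : ∀ p : ZMod n × W, (n * (f p.2).val + p.1.val) / (n - 1) < m := by
    intro p
    rw [Nat.div_lt_iff_lt_mul (by omega : 0 < n - 1)]
    have h1 : n * ((f p.2).val + 1) ≤ n * k := Nat.mul_le_mul_left n (f p.2).is_lt
    have h2 : p.1.val < n := ZMod.val_lt p.1
    have h3 : n * ((f p.2).val + 1) = n * (f p.2).val + n := by ring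
    omega
  set F : ZMod n × W → Fin m := fun p => ⟨(n * (f p.2).val + p.1.val) / (n - 1), hbound p⟩ with hF
  refine ⟨F, ?_⟩
  rintro c ⟨l, hm, hd⟩
  obtain ⟨hlen, hnd, hchain, hwrap⟩ := hd
  have hval : ∀ v ∈ l, (n * (f v.2).val + v.1.val) / (n - 1) = c.val := by
    intro v hv
    have h0 := hm v hv
    simp only [Set.mem_preimage, Set.mem_singleton_iff, hF] at h0
    exact congrArg Fin.val h0
  have hwin : ∀ v ∈ l, c.val * (n-1) ≤ n * (f v.2).val + v.1.val ∧
      n * (f v.2).val + v.1.val ≤ c.val * (n-1) + (n - 2) := by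
    intro v hv
    set t := n * (f v.2).val + v.1.val with ht
    have h1 := hval v hv
    have h2 := Nat.div_add_mod t (n - 1)
    have h3 : t % (n-1) < n - 1 := Nat.mod_lt _ (by omega)
    have hcomm : (n-1) * (t / (n-1)) = (t / (n-1)) * (n-1) := Nat.mul_comm _ _
    rw [h1] at h2 hcomm
    constructor
    · calc c.val * (n-1) = t / (n-1) * (n-1) := by rw [h1]
        _ ≤ t := Nat.div_mul_le_self t (n-1)
    · omega
  set r : ZMod n := ((c.val * (n-1) + (n-1) : ℕ) : ZMod n) with hr
  have hravoid : ∀ v ∈ l, v.1 ≠ r := by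
    intro v hv hveq
    obtain ⟨hw1, hw2⟩ := hwin v hv
    set t := n * (f v.2).val + v.1.val with ht
    have hcast : ((t : ℕ) : ZMod n) = v.1 := by
      rw [ht]
      push_cast
      rw [ZMod.natCast_self, ZMod.natCast_rightInverse v.1]
      ring
    have hmod : t ≡ (c.val*(n-1)+(n-1)) [MOD n] :=
      (ZMod.natCast_eq_natCast_iff _ _ _).mp (by rw [hcast, hveq, hr])
    have hdvd : n ∣ (c.val*(n-1)+(n-1)) - t := (Nat.modEq_iff_dvd' (by omega)).mp hmod
    have hle := Nat.le_of_dvd (by omega) hdvd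
    omega
  have hsf := aux_single_fiber hn ⟨hlen, hnd, hchain, hwrap⟩ r hravoid
  have hne : l ≠ [] := by intro h; rw [h] at hlen; simp at hlen
  set v0 := l.head hne with hv0
  have hv0l : v0 ∈ l := List.head_mem hne
  have hfib : ∀ v ∈ l, v.1 = v0.1 := fun v hv => hsf v hv v0 hv0l
  have hsamef : ∀ v ∈ l, f v.2 = f v0.2 := by
    intro v hv
    by_contra hne2
    have key : ∀ a b : ℕ, a < b → c.val*(n-1) ≤ n * a + v0.1.val →
        n * b + v0.1.val ≤ c.val*(n-1) + (n-2) → False := by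
      intro a b hab hlo hhi
      have h4 : n * (a+1) ≤ n * b := Nat.mul_le_mul_left n hab
      have h5 : n * (a+1) = n*a + n := by ring
      omega
    obtain ⟨hwa, hwb⟩ := hwin v hv
    obtain ⟨hwc, hwd⟩ := hwin v0 hv0l
    rw [hfib v hv] at hwa hwb
    rcases Nat.lt_or_ge (f v.2).val (f v0.2).val with hlt | hge
    · exact key _ _ hlt hwa hwd
    · have hlt2 : (f v0.2).val < (f v.2).val :=
        lt_of_le_of_ne hge (fun h => hne2 (Fin.val_injective h.symm))
      exact key _ _ hlt2 hwc hwb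
  refine hf (f v0.2) ⟨l.map Prod.snd, ?_, ?_, ?_, ?_, ?_⟩
  · intro x hx
    simp only [List.mem_map] at hx
    obtain ⟨v, hv, rfl⟩ := hx
    exact hsamef v hv
  · simpa using hlen
  · refine List.Nodup.map_on ?_ hnd
    intro a ha b hb hab
    exact Prod.ext ((hfib a ha).trans (hfib b hb).symm) hab
  · unfold List.Chain'
    rw [List.isChain_iff_getElem]
    intro j hj
    simp only [List.get_eq_getElem, List.getElem_map]
    have hj' : j + 1 < l.length := by simp at hj; omega
    have harc := List.isChain_iff_getElem.mp hchain j (by omega)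
    rcases harc with harc | ⟨-, hHA⟩
    · exfalso
      have e1 : l[j].1 = v0.1 := hfib _ (List.getElem_mem _)
      have e2 : l[j+1].1 = v0.1 := hfib _ (List.getElem_mem _)
      have harc' : l[j+1].1 = l[j].1 + 1 := harc
      rw [e1, e2] at harc'
      exact one_ne_zero (left_eq_add.mp harc')
    · exact hHA
  · intro h'
    rw [List.getLast_eq_getElem, List.head_eq_getElem]
    simp only [List.getElem_map, List.length_map]
    have hw := hwrap hne
    rw [List.getLast_eq_getElem, List.head_eq_getElem] at hw
    rcases hw with harc | ⟨-, hHA⟩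
    · exfalso
      have e1 : l[l.length - 1].1 = v0.1 := hfib _ (List.getElem_mem _)
      have e2 : l[0].1 = v0.1 := hfib _ (List.getElem_mem _)
      have harc' : l[0].1 = l[l.length - 1].1 + 1 := harc
      rw [e1, e2] at harc'
      exact one_ne_zero (left_eq_add.mp harc')
    · exact hHA


theorem stmt14 {W : Type*} [Fintype W] (n : ℕ) (hn : 2 ≤ n)
    (HA : W → W → Prop) (hH : Irreflexive HA) :
    (dichromaticNumber (lexAdj (dicycleAdj n) HA) : ℤ) =
      (dichromaticNumber HA : ℤ) +
        ⌈(dichromaticNumber HA : ℚ) / ((n : ℚ) - 1)⌉ := by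
  haveI : NeZero n := ⟨by omega⟩
  set k := dichromaticNumber HA with hk
  set q := (k + n - 2) / (n - 1) with hq
  have hB : k ≤ q * (n-1) ∧ q * (n-1) ≤ k + n - 2 := by
    have h2 := Nat.div_add_mod (k + n - 2) (n - 1)
    have h3 : (k + n - 2) % (n-1) < n - 1 := Nat.mod_lt _ (by omega)
    have hcomm : (n-1) * ((k+n-2)/(n-1)) = ((k+n-2)/(n-1)) * (n-1) := Nat.mul_comm _ _
    rw [← hq] at h2 hcomm
    constructor <;> omega
  obtain ⟨hB1, hB2⟩ := hB
  have hnk : k * (n - 1) + k = n * k := by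
    have hsub : n - 1 + 1 = n := by omega
    calc k*(n-1)+k = k*((n-1)+1) := by ring
      _ = k*n := by rw [hsub]
      _ = n*k := Nat.mul_comm _ _
  have hmain : dichromaticNumber (lexAdj (dicycleAdj n) HA) = k + q := by
    refine le_antisymm ?_ ?_
    · obtain ⟨f, hf⟩ := Nat.sInf_mem (aux_colorSet_nonempty HA)
      have hup : n * k ≤ (k + q) * (n - 1) := by
        have hexp : (k + q) * (n-1) = k * (n-1) + q * (n-1) := by ring
        omega
      obtain ⟨F, hFa⟩ := aux_upper hn f hf hup
      exact Nat.sInf_le ⟨F, hFa⟩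
    · obtain ⟨F, hFa⟩ := Nat.sInf_mem
        (aux_colorSet_nonempty (lexAdj (dicycleAdj n) HA))
      have hml := aux_lower hn F hFa
      rw [← hk] at hml
      set m := dichromaticNumber (lexAdj (dicycleAdj n) HA) with hm
      have hml2 : n * k ≤ m * (n - 1) := hml
      clear hml
      by_contra hcon
      push_neg at hcon
      have hmul : (m+1) * (n-1) ≤ (k + q) * (n-1) := Nat.mul_le_mul_right _ (by omega)
      have he1 : (m+1) * (n-1) = m * (n-1) + (n-1) := by ring
      have he2 : (k + q) * (n-1) = k * (n-1) + q * (n-1) := by ring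
      omega
  have hceil : ⌈(k : ℚ) / ((n : ℚ) - 1)⌉ = (q : ℤ) := by
    have hb : (0 : ℚ) < (n : ℚ) - 1 := by
      have : (2 : ℚ) ≤ (n : ℚ) := by exact_mod_cast hn
      linarith
    have hc1 : ((q * (n-1) : ℕ) : ℚ) = (q : ℚ) * ((n : ℚ) - 1) := by
      push_cast [Nat.cast_sub (show 1 ≤ n by omega)]
      ring
    have hc2 : ((k + n - 2 : ℕ) : ℚ) = (k : ℚ) + (n : ℚ) - 2 := by
      push_cast [Nat.cast_sub (show 2 ≤ k + n by omega)]
      ring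
    have hq1 : (k : ℚ) ≤ (q : ℚ) * ((n : ℚ) - 1) := by
      rw [← hc1]; exact_mod_cast hB1
    have hq2 : (q : ℚ) * ((n : ℚ) - 1) ≤ (k : ℚ) + (n : ℚ) - 2 := by
      rw [← hc1, ← hc2]; exact_mod_cast hB2
    rw [Int.ceil_eq_iff]
    constructor
    · rw [lt_div_iff₀ hb]
      push_cast
      nlinarith
    · rw [div_le_iff₀ hb]
      push_cast
      linarith
  rw [hmain, hceil]
  push_cast
  ring
end

section
/- Let n ≥ 2, let H be a digraph, and let f : V(C⃗_n[H]) → Fin ℓ be a coloring of the lexicographic product C⃗_n[H] such that, for each i ∈ ZMod n, the restriction of f to the copy H_i = {i} × V(H) has all its color classes acyclic in H_i. Then f is an acyclic coloring of C⃗_n[H] (every color class is acyclic in C⃗_n[H]) if and only if for every color c ∈ Fin ℓ there exists i ∈ ZMod n such that c is not used by f on H_i. -/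
private lemma my_ivt15 (a : ℕ → ℕ) (h0 : a 0 = 0) (h : ∀ k, a (k+1) ≤ a k + 1) :
    ∀ t m, m ≤ a t → ∃ k, k ≤ t ∧ a k = m := by
  intro t
  induction t with
  | zero => intro m hm; exact ⟨0, le_rfl, by omega⟩
  | succ t ih =>
    intro m hm
    by_cases hc : m ≤ a t
    · obtain ⟨k, hk, hak⟩ := ih m hc
      exact ⟨k, hk.trans (Nat.le_succ t), hak⟩
    · have := h t
      exact ⟨t + 1, le_rfl, by omega⟩

theorem stmt15 {W : Type*} (n : ℕ) (hn : 2 ≤ n)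
    (HA : W → W → Prop) (hH : Irreflexive HA)
    (ℓ : ℕ) (f : ZMod n × W → Fin ℓ)
    (hres : ∀ i : ZMod n, ∀ c : Fin ℓ, AcyclicSet HA {x : W | f (i, x) = c}) :
    IsAcyclicColoring (lexAdj (dicycleAdj n) HA) f ↔
      ∀ c : Fin ℓ, ∃ i : ZMod n, ∀ x : W, f (i, x) ≠ c := by
  haveI : Fact (1 < n) := ⟨hn⟩
  haveI : NeZero n := ⟨by omega⟩
  have hone : (1 : ZMod n) ≠ 0 := one_ne_zero
  constructor
  · -- acyclic coloring → every color misses some layer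
    intro hac c
    by_contra hcon
    push_neg at hcon
    choose x hx using hcon
    set l : List (ZMod n × W) :=
      (List.range n).map (fun i : ℕ => ((i : ZMod n), x (i : ZMod n))) with hl
    have hlen : l.length = n := by simp [hl]
    refine hac c ⟨l, ?_, ?_, ?_, ?_, ?_⟩
    · intro v hv
      simp only [hl, List.mem_map, List.mem_range] at hv
      obtain ⟨i, _, rfl⟩ := hv
      exact hx _
    · omega
    · refine List.Nodup.map_on ?_ List.nodup_range
      intro a ha b hb hab
      simp only [List.mem_range] at ha hb
      have h1 : ((a : ZMod n)) = (b : ZMod n) := congrArg Prod.fst hab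
      have h2 := congrArg ZMod.val h1
      rwa [ZMod.val_natCast_of_lt ha, ZMod.val_natCast_of_lt hb] at h2
    · rw [List.Chain', List.isChain_iff_getElem]
      intro i hi
      simp only [hlen] at hi
      simp only [hl, List.get_eq_getElem, List.getElem_map, List.getElem_range]
      left
      show ((i + 1 : ℕ) : ZMod n) = (i : ZMod n) + 1
      push_cast
      ring
    · intro h
      rw [List.getLast_eq_getElem, List.head_eq_getElem]
      simp only [hl, List.getElem_map, List.getElem_range, List.length_map,
        List.length_range]
      left
      show ((0 : ℕ) : ZMod n) = ((n - 1 : ℕ) : ZMod n) + 1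
      have e1 : ((n - 1 : ℕ) : ZMod n) + 1 = ((n - 1 + 1 : ℕ) : ZMod n) := by
        push_cast; ring
      rw [e1]
      have e2 : n - 1 + 1 = n := by omega
      rw [e2]
      simp
  · -- missed layers → acyclic coloring
    rintro hex c ⟨l, hmem, hlen2, hnd, hch, hlast⟩
    have hne : l ≠ [] := by
      intro h; rw [h] at hlen2; simp at hlen2
    set t := l.length with ht
    set l' : List (ZMod n × W) := l ++ [l.head hne] with hl'
    have hlen' : l'.length = t + 1 := by simp [hl', ht]
    have hget : ∀ k (hk : k < t), l'[k]'(by omega) = l[k]'hk := by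
      intro k hk; exact List.getElem_append_left hk
    have hgetT : l'[t]'(by omega) = l[0]'(by omega) := by
      show (l ++ [l.head hne])[t]'(by simp [ht]) = l[0]'(by omega)
      rw [List.getElem_append_right (le_refl t)]
      have e0 : t - l.length = 0 := by omega
      simp [e0, List.head_eq_getElem]
    have hch' : ∀ k (hk : k < t),
        lexAdj (dicycleAdj n) HA (l'[k]'(by omega)) (l'[k+1]'(by omega)) := by
      have hc2 : List.Chain' (lexAdj (dicycleAdj n) HA) l' := by
        rw [hl', List.Chain', List.isChain_append]
        refine ⟨hch, List.isChain_singleton _, ?_⟩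
        intro p hp q hq
        simp only [List.head?_cons, Option.mem_def, Option.some_inj] at hq
        rw [List.getLast?_eq_getLast hne, Option.mem_def, Option.some_inj] at hp
        rw [← hp, ← hq]
        exact hlast hne
      rw [List.Chain', List.isChain_iff_getElem] at hc2
      intro k hk
      have := hc2 k (by rw [hlen']; omega)
      simpa using this
    set g : ℕ → ZMod n := fun k => (l'.getD k (l.head hne)).1 with hg
    have hgdef : ∀ k (hk : k < t + 1), g k = (l'[k]'(by omega)).1 := by
      intro k hk; simp only [hg]; rw [List.getD_eq_getElem l' _ (by omega)]
    have hfstidx : ∀ k (hk : k < t), (l[k]'hk).1 = g k := by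
      intro k hk; rw [hgdef k (by omega), hget k hk]
    have hstep : ∀ k, k < t → g (k+1) = g k + 1 ∨ g (k+1) = g k := by
      intro k hk
      have harc := hch' k hk
      rw [lexAdj] at harc
      rcases harc with h | h
      · left
        rw [hgdef (k+1) (by omega), hgdef k (by omega)]
        exact h
      · right
        rw [hgdef (k+1) (by omega), hgdef k (by omega)]
        exact h.1.symm
    classical
    set a : ℕ → ℕ := fun k =>
      ((List.range k).filter (fun j => decide (g (j+1) = g j + 1))).length with ha
    have ha0 : a 0 = 0 := by simp [ha]
    have hasucc : ∀ k, a (k+1) = a k + (if g (k+1) = g k + 1 then 1 else 0) := by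
      intro k
      simp only [ha, List.range_succ, List.filter_append, List.length_append]
      by_cases h : g (k+1) = g k + 1 <;> simp [h]
    have hamono : ∀ k, a (k+1) ≤ a k + 1 := by
      intro k; rw [hasucc]; split <;> omega
    have hgk : ∀ k, k ≤ t → g k = g 0 + (a k : ZMod n) := by
      intro k
      induction k with
      | zero => intro _; simp [ha0]
      | succ k ih =>
        intro hk
        have ihk := ih (by omega)
        rcases hstep k (by omega) with h | h
        · have e : a (k+1) = a k + 1 := by rw [hasucc]; simp [h]
          rw [h, ihk, e]
          push_cast
          ring
        · have hns : ¬ (g (k+1) = g k + 1) := by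
            intro hc
            rw [h] at hc
            exact hone (by linear_combination -hc)
          have e : a (k+1) = a k := by rw [hasucc]; simp [hns]
          rw [h, ihk, e]
    have hgt : g t = g 0 := by
      rw [hgdef t (by omega), hgdef 0 (by omega), hgetT, hget 0 (by omega)]
    have hdvd : n ∣ a t := by
      have h1 := hgk t le_rfl
      rw [hgt] at h1
      have h2 : ((a t : ℕ) : ZMod n) = 0 := by linear_combination -h1
      exact (ZMod.natCast_eq_zero_iff (a t) n).mp h2
    have hcol : ∀ v ∈ l, f v = c := fun v hv => hmem v hv
    by_cases hzero : a t = 0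
    · -- all vertices in one layer: contradiction with hres
      have hnostep : ∀ j < t, g (j+1) = g j := by
        intro j hj
        rcases hstep j hj with h | h
        · exfalso
          have e1 : ((List.range t).filter (fun j => decide (g (j+1) = g j + 1))) = [] :=
            List.length_eq_zero_iff.mp hzero
          have e2 := List.filter_eq_nil_iff.mp e1 j (List.mem_range.mpr hj)
          simp [h] at e2
        · exact h
      have hconst : ∀ k, k ≤ t → g k = g 0 := by
        intro k
        induction k with
        | zero => intro _; rfl
        | succ k ih => intro hk; rw [hnostep k (by omega), ih (by omega)]
      have hfst : ∀ v ∈ l, v.1 = g 0 := by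
        intro v hv
        obtain ⟨k, hk, rfl⟩ := List.mem_iff_getElem.mp hv
        rw [hfstidx k hk]
        exact hconst k (by omega)
      refine hres (g 0) c ⟨l.map Prod.snd, ?_, ?_, ?_, ?_, ?_⟩
      · intro w hw
        simp only [List.mem_map] at hw
        obtain ⟨v, hv, rfl⟩ := hw
        show f (g 0, v.2) = c
        rw [← hfst v hv]
        exact hcol v hv
      · simpa using hlen2
      · refine List.Nodup.map_on ?_ hnd
        intro p hp q hq hpq
        exact Prod.ext (by rw [hfst p hp, hfst q hq]) hpq
      · rw [List.Chain', List.isChain_iff_getElem]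
        intro k hk
        simp only [List.length_map] at hk
        simp only [List.get_eq_getElem, List.getElem_map]
        have harc := hch' k (by omega)
        rw [hget k (by omega), hget (k+1) (by omega)] at harc
        rcases harc with h | h
        · exfalso
          have e1 : (l[k]'(by omega)).1 = g 0 :=
            (hfstidx k (by omega)).trans (hconst k (by omega))
          have e2 : (l[k+1]'(by omega)).1 = g 0 :=
            (hfstidx (k+1) (by omega)).trans (hconst (k+1) (by omega))
          rw [dicycleAdj, e1, e2] at h
          exact hone (by linear_combination -h)
        · exact h.2
      · intro hne2
        rw [List.getLast_eq_getElem, List.head_eq_getElem]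
        simp only [List.getElem_map, List.length_map]
        have harc := hlast hne
        rw [List.getLast_eq_getElem, List.head_eq_getElem] at harc
        rcases harc with h | h
        · exfalso
          have e1 : (l[l.length - 1]'(by omega)).1 = g 0 :=
            (hfstidx (l.length - 1) (by omega)).trans (hconst (l.length - 1) (by omega))
          have e2 : (l[0]'(by omega)).1 = g 0 :=
            (hfstidx 0 (by omega)).trans (hconst 0 (by omega))
          rw [dicycleAdj, e1, e2] at h
          exact hone (by linear_combination -h)
        · exact h.2
    · -- some +1 step: the cycle visits every layer, including the missed one
      have hpos : 0 < a t := Nat.pos_of_ne_zero hzero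
      have hnle : n ≤ a t := Nat.le_of_dvd hpos hdvd
      obtain ⟨i, hi⟩ := hex c
      have hm : (i - g 0).val < n := ZMod.val_lt _
      obtain ⟨k, hk, hak⟩ := my_ivt15 a ha0 hamono t (i - g 0).val (by omega)
      have hgi : g k = i := by
        rw [hgk k hk, hak]
        have : (((i - g 0).val : ℕ) : ZMod n) = i - g 0 := by
          simp [ZMod.natCast_val, ZMod.cast_id]
        rw [this]
        ring
      have hvmem : l'[k]'(by omega) ∈ l := by
        by_cases hkt : k < t
        · rw [hget k hkt]; exact List.getElem_mem _
        · have : k = t := by omega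
          subst this
          rw [hgetT]; exact List.getElem_mem _
      have hv1 : (l'[k]'(by omega)).1 = i := by
        rw [← hgdef k (by omega)]; exact hgi
      have hfv := hcol _ hvmem
      apply hi (l'[k]'(by omega)).2
      rw [← hv1]
      exact hfv
end

section
/- Let G and H be digraphs with V(H) nonempty, and suppose H is a DAG (H contains no directed cycle). Then χ_a(G □ H) = χ_a(G), χ_a(G ⊠ H) = χ_a(G), χ_a(G[H]) = χ_a(G), and the direct product G × H contains no directed cycle, i.e., χ_a(G × H) ≤ 1. -/
namespace Stmt16Aux

open Relation

variable {V W : Type*}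

def restr (S : Set V) (A : V → V → Prop) : V → V → Prop :=
  fun a b => a ∈ S ∧ b ∈ S ∧ A a b

lemma restr_irrefl {S : Set V} {A : V → V → Prop} (hA : Irreflexive A) :
    Irreflexive (restr S A) := fun a h => hA a h.2.2

lemma not_nodup_split {l : List V} (h : ¬ l.Nodup) :
    ∃ (x : V) (l₁ l₂ l₃ : List V), l = l₁ ++ x :: l₂ ++ x :: l₃ := by
  induction l with
  | nil => simp at h
  | cons a t ih =>
    by_cases ha : a ∈ t
    · obtain ⟨s, t', rfl⟩ := List.append_of_mem ha
      exact ⟨a, [], s, t', by simp⟩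
    · have ht : ¬ t.Nodup := fun ht => h (List.nodup_cons.mpr ⟨ha, ht⟩)
      obtain ⟨x, l₁, l₂, l₃, rfl⟩ := ih ht
      exact ⟨x, a :: l₁, l₂, l₃, rfl⟩

lemma exists_dicycle_of_walk {A : V → V → Prop} (hA : Irreflexive A) :
    ∀ (n : ℕ) (w : List V), w.length ≤ n → 2 ≤ w.length → w.Chain' A →
      w.head? = w.getLast? → ∃ l, IsDicycle A l := by
  intro n
  induction n with
  | zero => intro w hw h2 _ _; omega
  | succ n ih =>
    intro w hwn h2 hchain hclosed
    have hne : w ≠ [] := by intro e; simp [e] at h2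
    -- length ≥ 3
    have h3 : 3 ≤ w.length := by
      rcases Nat.lt_or_ge w.length 3 with hlt | hge
      · exfalso
        have : w.length = 2 := by omega
        obtain ⟨a, b, rfl⟩ := List.length_eq_two.mp this
        have : a = b := by simpa using hclosed
        subst this
        have : A a a := List.isChain_pair.mp hchain
        exact hA a this
      · exact hge
    set l := w.dropLast with hl
    have hlen : l.length = w.length - 1 := by simp [hl]
    have hlne : l ≠ [] := by
      intro e; rw [e] at hlen; simp at hlen; omega
    have hw : l ++ [w.getLast hne] = w := List.dropLast_append_getLast hne
    have hchain' : List.Chain' A (l ++ [w.getLast hne]) := by rw [hw]; exact hchain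
    obtain ⟨hc1, _, hlastarc⟩ := List.isChain_append.mp hchain'
    have harc : A (l.getLast hlne) (w.getLast hne) := by
      apply hlastarc
      · rw [List.getLast?_eq_getLast hlne]; rfl
      · rfl
    have hheadeq : w.head? = l.head? := by
      conv_lhs => rw [← hw]
      exact List.head?_append_of_ne_nil l hlne
    have hheads : w.head hne = l.head hlne := by
      have h1 : w.head? = some (w.head hne) := List.head?_eq_head hne
      have h2' : l.head? = some (l.head hlne) := List.head?_eq_head hlne
      rw [hheadeq, h2'] at h1
      exact (Option.some.inj h1).symm
    have hclval : w.getLast hne = w.head hne := by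
      have h1 : w.head? = some (w.head hne) := List.head?_eq_head hne
      have h2' : w.getLast? = some (w.getLast hne) := List.getLast?_eq_getLast hne
      rw [h1, h2'] at hclosed
      exact (Option.some.inj hclosed).symm
    by_cases hnd : l.Nodup
    · refine ⟨l, by omega, hnd, hc1, ?_⟩
      intro h
      rw [← hheads, ← hclval]
      exact harc
    · obtain ⟨x, l₁, l₂, l₃, hsplit⟩ := not_nodup_split hnd
      set w' := x :: l₂ ++ [x] with hw'
      have hinf : w' <:+: l := by
        refine ⟨l₁, l₃, ?_⟩
        rw [hsplit, hw']
        simp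
      have hc' : w'.Chain' A := hc1.infix hinf
      have hlen' : w'.length = l₂.length + 2 := by simp [hw']
      have hllen : l.length = l₁.length + l₂.length + l₃.length + 2 := by
        simp [hsplit]; omega
      apply ih w' (by omega) (by omega) hc'
      show w'.head? = w'.getLast?
      rw [hw']
      have : ((x :: l₂) ++ [x]).getLast? = some x := List.getLast?_concat
      simp only [List.cons_append] at this ⊢
      rw [this]
      rfl

lemma chain'_restr_of {A : V → V → Prop} {S : Set V} :
    ∀ {l : List V}, l.Chain' A → (∀ v ∈ l, v ∈ S) → l.Chain' (restr S A) := by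
  intro l
  induction l with
  | nil => intro _ _; exact List.IsChain.nil
  | cons a t ih =>
    intro h hm
    cases t with
    | nil => exact List.IsChain.singleton _
    | cons b t' =>
      simp only [List.Chain', List.isChain_cons_cons] at h ⊢
      exact ⟨⟨hm a (by simp), hm b (by simp), h.1⟩,
        ih h.2 (fun v hv => hm v (List.mem_cons_of_mem _ hv))⟩

lemma mem_of_chain'_restr {A : V → V → Prop} {S : Set V} :
    ∀ {l : List V}, 2 ≤ l.length → l.Chain' (restr S A) → ∀ v ∈ l, v ∈ S := by
  intro l
  induction l with
  | nil => simp
  | cons a t ih =>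
    intro h2 hc v hv
    cases t with
    | nil => simp at h2
    | cons b t' =>
      simp only [List.Chain', List.isChain_cons_cons] at hc
      rcases List.mem_cons.mp hv with rfl | hv'
      · exact hc.1.1
      · rcases List.mem_cons.mp hv' with rfl | hv''
        · exact hc.1.2.1
        · have hne : t' ≠ [] := List.ne_nil_of_mem hv''
          have : 2 ≤ (b :: t').length := by
            have := List.length_pos_iff.mpr hne
            simp; omega
          exact ih this hc.2 v hv'

lemma acyclicSet_iff {A : V → V → Prop} (hA : Irreflexive A) (S : Set V) :
    AcyclicSet A S ↔ ∀ a, ¬ Relation.TransGen (restr S A) a a := by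
  constructor
  · intro hac a hloop
    obtain ⟨b, hab, hba⟩ := Relation.TransGen.head'_iff.mp hloop
    obtain ⟨l, hchain, hlast⟩ := List.exists_isChain_cons_of_relationReflTransGen hba
    have hch : (a :: b :: l).Chain' (restr S A) := List.IsChain.cons_cons hab hchain
    have hcl : (a :: b :: l).head? = (a :: b :: l).getLast? := by
      have h1 : (a :: b :: l).getLast (by simp) = a := by
        rw [List.getLast_cons (by simp : (b :: l) ≠ [])]
        exact hlast
      rw [List.getLast?_eq_getLast (by simp : (a :: b :: l) ≠ []), h1]
      rfl
    obtain ⟨l', hdc⟩ := exists_dicycle_of_walk (restr_irrefl hA) (a :: b :: l).length _ le_rfl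
      (by simp) hch hcl
    obtain ⟨h2, hnd, hchn, hle⟩ := hdc
    apply hac
    refine ⟨l', mem_of_chain'_restr h2 hchn, h2, hnd,
      hchn.imp (fun _ _ h => h.2.2), fun h => (hle h).2.2⟩
  · rintro h ⟨l, hmem, h2, hnd, hch, hlast⟩
    have hne : l ≠ [] := by intro e; simp [e] at h2
    have hchR : l.Chain' (restr S A) := chain'_restr_of hch hmem
    cases l with
    | nil => exact hne rfl
    | cons a t =>
      have hrt : Relation.ReflTransGen (restr S A) a ((a :: t).getLast hne) :=
        List.relationReflTransGen_of_exists_isChain_cons t hchR rfl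
      have harc : restr S A ((a :: t).getLast hne) a :=
        ⟨hmem _ (List.getLast_mem hne), hmem a (by simp), hlast hne⟩
      exact h a (Relation.TransGen.tail' hrt harc)

lemma isDicycle_mono {A B : V → V → Prop} (hAB : ∀ a b, A a b → B a b) {l : List V}
    (h : IsDicycle A l) : IsDicycle B l :=
  ⟨h.1, h.2.1, h.2.2.1.imp hAB, fun hne => hAB _ _ (h.2.2.2 hne)⟩

lemma acyclicSet_anti {A B : V → V → Prop} (hAB : ∀ a b, A a b → B a b) {S : Set V}
    (h : AcyclicSet B S) : AcyclicSet A S := by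
  rintro ⟨l, hm, hdc⟩
  exact h ⟨l, hm, isDicycle_mono hAB hdc⟩

lemma acyclicSet_subset {A : V → V → Prop} {S T : Set V} (hST : S ⊆ T)
    (h : AcyclicSet A T) : AcyclicSet A S := by
  rintro ⟨l, hm, hdc⟩
  exact h ⟨l, fun v hv => hST (hm v hv), hdc⟩

end Stmt16Aux

namespace Stmt16Aux

open Relation

variable {V W : Type*}

lemma lex_decomp {GA : V → V → Prop} {HA : W → W → Prop} {C : Type*} (f : V → C) (c : C)
    {p q : V × W}
    (h : TransGen (restr ((fun p : V × W => f p.1) ⁻¹' {c}) (lexAdj GA HA)) p q) :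
    TransGen (restr (f ⁻¹' {c}) GA) p.1 q.1 ∨ (p.1 = q.1 ∧ TransGen HA p.2 q.2) := by
  induction h with
  | single h =>
    obtain ⟨hp, hq, harc⟩ := h
    rcases harc with hg | ⟨he, hh⟩
    · exact Or.inl (TransGen.single ⟨hp, hq, hg⟩)
    · exact Or.inr ⟨he, TransGen.single hh⟩
  | tail h1 h2 ih =>
    obtain ⟨hb, hq, harc⟩ := h2
    rcases ih with ihl | ⟨he, ihh⟩
    · rcases harc with hg | ⟨he2, hh⟩
      · exact Or.inl (ihl.tail ⟨hb, hq, hg⟩)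
      · exact Or.inl (he2 ▸ ihl)
    · rcases harc with hg | ⟨he2, hh⟩
      · left
        refine TransGen.single ⟨?_, hq, ?_⟩
        · show f _ ∈ ({c} : Set C)
          rw [he]; exact hb
        · show GA _ _
          rw [he]; exact hg
      · exact Or.inr ⟨he.trans he2, ihh.tail hh⟩

lemma lex_irrefl {GA : V → V → Prop} {HA : W → W → Prop} (hG : Irreflexive GA)
    (hH : Irreflexive HA) : Irreflexive (lexAdj GA HA) :=
  fun p h => h.elim (hG p.1) (fun h' => hH p.2 h'.2)

lemma transGen_HA_irrefl {HA : W → W → Prop} (hH : Irreflexive HA)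
    (hDAG : AcyclicSet HA Set.univ) : ∀ a, ¬ TransGen HA a a := fun a h =>
  (acyclicSet_iff hH Set.univ).mp hDAG a
    (Relation.TransGen.mono (fun _ _ hxy => (⟨Set.mem_univ _, Set.mem_univ _, hxy⟩ : restr Set.univ HA _ _)) _ _ h)

lemma lex_coloring {GA : V → V → Prop} {HA : W → W → Prop} {C : Type*}
    (hG : Irreflexive GA) (hH : Irreflexive HA) (hDAG : AcyclicSet HA Set.univ)
    {f : V → C} (hf : IsAcyclicColoring GA f) :
    IsAcyclicColoring (lexAdj GA HA) (fun p => f p.1) := by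
  intro c
  rw [acyclicSet_iff (lex_irrefl hG hH) _]
  intro p hp
  rcases lex_decomp f c hp with hl | ⟨_, hh⟩
  · exact (acyclicSet_iff hG _).mp (hf c) p.1 hl
  · exact transGen_HA_irrefl hH hDAG p.2 hh

lemma coloring_comp {V' : Type*} {A : V → V → Prop} {B : V' → V' → Prop} {C : Type*}
    (e : V → V') (he : Function.Injective e) (harc : ∀ u v, A u v → B (e u) (e v))
    {g : V' → C} (hg : IsAcyclicColoring B g) : IsAcyclicColoring A (fun v => g (e v)) := by
  intro c
  rintro ⟨l, hm, h2, hnd, hch, hlast⟩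
  apply hg c
  refine ⟨l.map e, ?_, by simpa using h2, hnd.map he, ?_, ?_⟩
  · intro v hv
    obtain ⟨u, hu, rfl⟩ := List.mem_map.mp hv
    exact hm u hu
  · simp only [List.Chain', List.isChain_map]
    exact hch.imp harc
  · intro h
    have hne : l ≠ [] := by simpa using h
    have hG' : (l.map e).getLast h = e (l.getLast hne) := by
      have h3 : (l.map e).getLast? = l.getLast?.map e := List.getLast?_map
      rw [List.getLast?_eq_getLast h, List.getLast?_eq_getLast hne] at h3
      exact Option.some.inj h3
    have hH' : (l.map e).head h = e (l.head hne) := by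
      have h3 : (l.map e).head? = l.head?.map e := List.head?_map
      rw [List.head?_eq_head h, List.head?_eq_head hne] at h3
      exact Option.some.inj h3
    rw [hG', hH']
    exact harc _ _ (hlast hne)

lemma direct_snd {GA : V → V → Prop} {HA : W → W → Prop} :
    ∀ {p q : V × W}, TransGen (restr Set.univ (fun p q : V × W => GA p.1 q.1 ∧ HA p.2 q.2)) p q →
      TransGen HA p.2 q.2 := by
  intro p q h
  induction h with
  | single h => exact TransGen.single h.2.2.2
  | tail _ h2 ih => exact ih.tail h2.2.2.2

end Stmt16Aux

theorem stmt16 {V W : Type*} [Fintype V] [Fintype W] [Nonempty W]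
    (GA : V → V → Prop) (HA : W → W → Prop)
    (hG : Irreflexive GA) (hH : Irreflexive HA)
    (hDAG : AcyclicSet HA Set.univ) :
    dichromaticNumber (cartAdj GA HA) = dichromaticNumber GA ∧
    dichromaticNumber (strongAdj GA HA) = dichromaticNumber GA ∧
    dichromaticNumber (lexAdj GA HA) = dichromaticNumber GA ∧
    AcyclicSet (directAdj GA HA) Set.univ ∧
    dichromaticNumber (directAdj GA HA) ≤ 1 := by
  classical
  have hdirirr : Irreflexive (directAdj GA HA) := fun p h => hH p.2 h.2
  have hdir : AcyclicSet (directAdj GA HA) Set.univ := by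
    rw [Stmt16Aux.acyclicSet_iff hdirirr Set.univ]
    intro p hp
    exact Stmt16Aux.transGen_HA_irrefl hH hDAG p.2 (Stmt16Aux.direct_snd hp)
  have key : ∀ P : V × W → V × W → Prop,
      (∀ p q, P p q → lexAdj GA HA p q) →
      (∀ (x : W) (u v : V), GA u v → P (u, x) (v, x)) →
      dichromaticNumber P = dichromaticNumber GA := by
    intro P hPl hGP
    unfold dichromaticNumber
    congr 1
    ext k
    simp only [Set.mem_setOf_eq]
    constructor
    · rintro ⟨F, hF⟩
      exact ⟨fun u => F (u, Classical.arbitrary W),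
        Stmt16Aux.coloring_comp (fun u => (u, Classical.arbitrary W))
          (fun u v h => congrArg Prod.fst h)
          (fun u v h => hGP _ u v h) hF⟩
    · rintro ⟨f, hf⟩
      refine ⟨fun p => f p.1, fun c => Stmt16Aux.acyclicSet_anti hPl ?_⟩
      exact Stmt16Aux.lex_coloring hG hH hDAG hf c
  refine ⟨?_, ?_, ?_, hdir, ?_⟩
  · refine key _ ?_ (fun x u v h => Or.inr ⟨h, rfl⟩)
    rintro p q (⟨he, hh⟩ | ⟨hg, _⟩)
    · exact Or.inr ⟨he, hh⟩
    · exact Or.inl hg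
  · refine key _ ?_ (fun x u v h => Or.inr (Or.inl ⟨h, rfl⟩))
    rintro p q (⟨he, hh⟩ | ⟨hg, _⟩ | ⟨hg, _⟩)
    · exact Or.inr ⟨he, hh⟩
    · exact Or.inl hg
    · exact Or.inl hg
  · exact key _ (fun p q h => h) (fun x u v h => Or.inl h)
  · apply Nat.sInf_le
    exact ⟨fun _ => (0 : Fin 1),
      fun c => Stmt16Aux.acyclicSet_subset (Set.subset_univ _) hdir⟩
end
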